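/- arXiv:1309.2020 — 3 statements merged into one kernel-verified Lean document; each statement's English description precedes it below -/
import Mathlib

section
/- Define f_n ∈ c* = ℓ¹ by f_n = e_{2n} − e_{2n+1} (coordinate functionals on the space c of convergent sequences). Then (f_n) is a disjoint weak*-null sequence in c*, but (|f_n|) does not converge to zero in the weak* topology; in fact |f_n|(𝟏) = 2 for all n, where 𝟏 is the constant-one sequence. -/
open Filter Topology

section Defs

variable {E : Type*} [NormedAddCommGroup E] [Lattice E] [HasSolidNorm E] [IsOrderedAddMonoid E] [NormedSpace ℝ E]

/-- The value of the modulus `|f|` of a functional at a positive element `x`: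
`|f|(x) = sup { f y : |y| ≤ x }`. -/
noncomputable def absVal (f : E →L[ℝ] ℝ) (x : E) : ℝ :=
  sSup ((fun y => f y) '' {y | |y| ≤ x})

/-- The value of the positive part `f⁺` of a functional at a positive element `x`:
`f⁺(x) = sup { f y : 0 ≤ y ≤ x }`. -/
noncomputable def posVal (f : E →L[ℝ] ℝ) (x : E) : ℝ :=
  sSup ((fun y => f y) '' {y | 0 ≤ y ∧ y ≤ x})

/-- The value of `|f|` at an arbitrary `x`, via `x = x⁺ - x⁻`. -/
noncomputable def absValF (f : E →L[ℝ] ℝ) (x : E) : ℝ :=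
  absVal f (x ⊔ 0) - absVal f (-x ⊔ 0)

/-- The value of `f⁺` at an arbitrary `x`, via `x = x⁺ - x⁻`. -/
noncomputable def posValF (f : E →L[ℝ] ℝ) (x : E) : ℝ :=
  posVal f (x ⊔ 0) - posVal f (-x ⊔ 0)

/-- The value of `f⁻ = (-f)⁺` at an arbitrary `x`. -/
noncomputable def negValF (f : E →L[ℝ] ℝ) (x : E) : ℝ :=
  posValF (-f) x

/-- `f ≤ g` in the dual order: `f x ≤ g x` for all `x ≥ 0`. -/
def FunLe (f g : E →L[ℝ] ℝ) : Prop := ∀ x : E, 0 ≤ x → f x ≤ g x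

/-- `|f| ≤ |g|` in the dual order. -/
def FunAbsLe (f g : E →L[ℝ] ℝ) : Prop := ∀ x : E, 0 ≤ x → absVal f x ≤ absVal g x

/-- Disjointness of two functionals: `(|f| ∧ |g|)(x) = 0` for all `x ≥ 0`, where
`(|f| ∧ |g|)(x) = inf { |f|(y) + |g|(x - y) : 0 ≤ y ≤ x }` (Riesz–Kantorovich). -/
def FunDisjoint (f g : E →L[ℝ] ℝ) : Prop :=
  ∀ x : E, 0 ≤ x →
    sInf ((fun y => absVal f y + absVal g (x - y)) '' {y | 0 ≤ y ∧ y ≤ x}) = 0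

/-- A sequence of functionals is weak*-null. -/
def WeakStarNull (f : ℕ → E →L[ℝ] ℝ) : Prop :=
  ∀ x : E, Tendsto (fun n => f n x) atTop (𝓝 0)

/-- A sequence in `E` is weakly null. -/
def WeaklyNull (x : ℕ → E) : Prop :=
  ∀ f : E →L[ℝ] ℝ, Tendsto (fun n => f (x n)) atTop (𝓝 0)

/-- A sequence of functionals is weakly null (i.e. null for `σ(E*, E**)`). -/
def WeaklyNullDual (f : ℕ → E →L[ℝ] ℝ) : Prop :=
  ∀ Φ : (E →L[ℝ] ℝ) →L[ℝ] ℝ, Tendsto (fun n => Φ (f n)) atTop (𝓝 0)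

/-- Disjointness of two elements of a Banach lattice. -/
def ElemDisjoint (x y : E) : Prop := |x| ⊓ |y| = 0

/-- A set is almost limited: it is norm bounded and every disjoint weak*-null sequence of
functionals converges uniformly to zero on it. -/
def AlmostLimited (A : Set E) : Prop :=
  Bornology.IsBounded A ∧
    ∀ f : ℕ → E →L[ℝ] ℝ, Pairwise (fun m n => FunDisjoint (f m) (f n)) → WeakStarNull f →
      ∀ ε > 0, ∀ᶠ n in atTop, ∀ x ∈ A, |f n x| < ε

/-- A set is limited: it is norm bounded and every weak*-null sequence of functionals
converges uniformly to zero on it. -/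
def LimitedSet (A : Set E) : Prop :=
  Bornology.IsBounded A ∧
    ∀ f : ℕ → E →L[ℝ] ℝ, WeakStarNull f →
      ∀ ε > 0, ∀ᶠ n in atTop, ∀ x ∈ A, |f n x| < ε

/-- A set is almost Dunford–Pettis: it is norm bounded and every disjoint weakly null
sequence of functionals converges uniformly to zero on it. -/
def AlmostDPSet (A : Set E) : Prop :=
  Bornology.IsBounded A ∧
    ∀ f : ℕ → E →L[ℝ] ℝ, Pairwise (fun m n => FunDisjoint (f m) (f n)) → WeaklyNullDual f →
      ∀ ε > 0, ∀ᶠ n in atTop, ∀ x ∈ A, |f n x| < ε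

/-- The solid hull of a set. -/
def SolidHull (A : Set E) : Set E := {y | ∃ x ∈ A, |y| ≤ |x|}

/-- A set is L-weakly compact: norm bounded, and every disjoint sequence in its solid hull
is norm null. -/
def LWeaklyCompact (A : Set E) : Prop :=
  Bornology.IsBounded A ∧
    ∀ x : ℕ → E, (∀ n, x n ∈ SolidHull A) → Pairwise (fun m n => ElemDisjoint (x m) (x n)) →
      Tendsto (fun n => ‖x n‖) atTop (𝓝 0)

/-- A set `B ⊆ E*` is an almost L-set: norm bounded, and every disjoint weakly null sequence
of `E` converges uniformly to zero on `B`. -/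
def AlmostLSet (B : Set (E →L[ℝ] ℝ)) : Prop :=
  Bornology.IsBounded B ∧
    ∀ x : ℕ → E, Pairwise (fun m n => ElemDisjoint (x m) (x n)) → WeaklyNull x →
      ∀ ε > 0, ∀ᶠ n in atTop, ∀ f ∈ B, |f (x n)| < ε

/-- The solid hull of a set of functionals, using the dual order. -/
def DualSolidHull (B : Set (E →L[ℝ] ℝ)) : Set (E →L[ℝ] ℝ) :=
  {g | ∃ f ∈ B, FunAbsLe g f}

/-- A set `B ⊆ E*` is L-weakly compact: norm bounded, and every disjoint sequence in its
solid hull is norm null. -/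
def DualLWeaklyCompact (B : Set (E →L[ℝ] ℝ)) : Prop :=
  Bornology.IsBounded B ∧
    ∀ g : ℕ → E →L[ℝ] ℝ, (∀ n, g n ∈ DualSolidHull B) →
      Pairwise (fun m n => FunDisjoint (g m) (g n)) →
        Tendsto (fun n => ‖g n‖) atTop (𝓝 0)

end Defs

/-- A Banach lattice is σ-Dedekind complete: every (countable) sequence bounded above has a
supremum. -/
def SigmaDedekindComplete (E : Type*) [NormedAddCommGroup E] [Lattice E] [HasSolidNorm E] [IsOrderedAddMonoid E] : Prop :=
  ∀ s : ℕ → E, (∃ b, ∀ n, s n ≤ b) → ∃ a, IsLUB (Set.range s) a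

/-- The norm of `E` is order continuous: if a downward directed set has infimum `0`, then it
contains elements of arbitrarily small norm. -/
def OrderContinuousNorm (E : Type*) [NormedAddCommGroup E] [Lattice E] [HasSolidNorm E] [IsOrderedAddMonoid E] : Prop :=
  ∀ A : Set E, A.Nonempty → DirectedOn (· ≥ ·) A → IsGLB A 0 →
    ∀ ε > 0, ∃ a ∈ A, ‖a‖ < ε

/-- The norm of `E*` is order continuous (with the dual order spelled out): if a nonempty
family of functionals is downward directed, consists of positive functionals, and `0` is its
greatest lower bound, then it contains functionals of arbitrarily small norm. -/
def DualOrderContinuousNorm (E : Type*) [NormedAddCommGroup E] [Lattice E] [HasSolidNorm E] [IsOrderedAddMonoid E] [NormedSpace ℝ E] :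
    Prop :=
  ∀ A : Set (E →L[ℝ] ℝ), A.Nonempty →
    (∀ f ∈ A, ∀ g ∈ A, ∃ h ∈ A, FunLe h f ∧ FunLe h g) →
    (∀ f ∈ A, FunLe 0 f) →
    (∀ g, (∀ f ∈ A, FunLe g f) → FunLe g 0) →
    ∀ ε > 0, ∃ f ∈ A, ‖f‖ < ε

/-- `E` has the weak Dunford–Pettis* property: `f n (x n) → 0` for every weakly null
sequence `(x n)` in `E` and every disjoint weak*-null sequence `(f n)` in `E*`. -/
def WDPStar (E : Type*) [NormedAddCommGroup E] [Lattice E] [HasSolidNorm E] [IsOrderedAddMonoid E] [NormedSpace ℝ E] : Prop :=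
  ∀ (x : ℕ → E) (f : ℕ → E →L[ℝ] ℝ), WeaklyNull x →
    Pairwise (fun m n => FunDisjoint (f m) (f n)) → WeakStarNull f →
      Tendsto (fun n => f n (x n)) atTop (𝓝 0)

/-- `E` has the positive Schur property: every weakly null sequence of positive elements is
norm null. -/
def PositiveSchur (E : Type*) [NormedAddCommGroup E] [Lattice E] [HasSolidNorm E] [IsOrderedAddMonoid E] [NormedSpace ℝ E] : Prop :=
  ∀ x : ℕ → E, (∀ n, 0 ≤ x n) → WeaklyNull x → Tendsto (fun n => ‖x n‖) atTop (𝓝 0)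

/-- A set is relatively weakly compact if the weak closure of its image in the weak space is
compact. -/
def RelWeaklyCompact {E : Type*} [NormedAddCommGroup E] [Lattice E] [HasSolidNorm E] [IsOrderedAddMonoid E] [NormedSpace ℝ E]
    (W : Set E) : Prop :=
  IsCompact (closure ((toWeakSpace ℝ E) '' W))

lemma tsum_two (g : ℕ → ℝ) (a b : ℕ) (hab : a ≠ b)
    (h : ∀ k, k ≠ a → k ≠ b → g k = 0) : ∑' k, g k = g a + g b := by
  rw [tsum_eq_sum (s := {a, b}) (fun k hk => by
    simp only [Finset.mem_insert, Finset.mem_singleton, not_or] at hk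
    exact h k hk.1 hk.2)]
  exact Finset.sum_pair hab

/-- The functionals `f n = e (2n) - e (2n+1)` on the space `c` of convergent
sequences (as elements of `c* = ℓ¹`, acting by `x ↦ ∑ k, f n k * x k`) form a disjoint
weak*-null sequence, with `|f n|(𝟏) = 2` for all `n`, and `(|f n|)` is not weak*-null. -/
theorem stmt3 (f : ℕ → ℕ → ℝ)
    (hf : ∀ n k, f n k = if k = 2 * n then (1 : ℝ) else if k = 2 * n + 1 then -1 else 0) :
    (Pairwise fun m n => ∀ k, min |f m k| |f n k| = 0) ∧
    (∀ x : ℕ → ℝ, (∃ l, Tendsto x atTop (𝓝 l)) →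
      Tendsto (fun n => ∑' k, f n k * x k) atTop (𝓝 0)) ∧
    (∀ n, ∑' k, |f n k| * (1 : ℝ) = 2) ∧
    ¬ (∀ x : ℕ → ℝ, (∃ l, Tendsto x atTop (𝓝 l)) →
      Tendsto (fun n => ∑' k, |f n k| * x k) atTop (𝓝 0)) := by
  have hzero : ∀ n k, k ≠ 2 * n → k ≠ 2 * n + 1 → f n k = 0 := by
    intro n k h1 h2; rw [hf]; simp [h1, h2]
  refine ⟨?_, ?_, ?_, ?_⟩
  · intro m n hmn k
    rcases Decidable.em (k = 2 * m ∨ k = 2 * m + 1) with h | h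
    · have : f n k = 0 := hzero n k (by omega) (by omega)
      simp [this]
    · push_neg at h
      have : f m k = 0 := hzero m k h.1 h.2
      simp [this]
  · rintro x ⟨l, hl⟩
    have key : ∀ n, ∑' k, f n k * x k = x (2 * n) - x (2 * n + 1) := by
      intro n
      rw [tsum_two _ (2 * n) (2 * n + 1) (by omega)
        (fun k h1 h2 => by rw [hzero n k h1 h2, zero_mul])]
      rw [hf, hf]
      simp; ring
    simp only [key]
    have h1 : Tendsto (fun n => x (2 * n)) atTop (𝓝 l) :=
      hl.comp (tendsto_atTop_mono (fun n => by simp only [id_eq]; omega) tendsto_id)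
    have h2 : Tendsto (fun n => x (2 * n + 1)) atTop (𝓝 l) :=
      hl.comp (tendsto_atTop_mono (fun n => by simp only [id_eq]; omega) tendsto_id)
    simpa using h1.sub h2
  · intro n
    rw [tsum_two _ (2 * n) (2 * n + 1) (by omega)
      (fun k h1 h2 => by rw [hzero n k h1 h2]; simp)]
    rw [hf, hf]
    norm_num
  · intro h
    have h2 := h (fun _ => 1) ⟨1, tendsto_const_nhds⟩
    have key : ∀ n, ∑' k, |f n k| * (1 : ℝ) = 2 := by
      intro n
      rw [tsum_two _ (2 * n) (2 * n + 1) (by omega)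
        (fun k h1 h2 => by rw [hzero n k h1 h2]; simp)]
      rw [hf, hf]
      norm_num
    simp only [key] at h2
    have := tendsto_nhds_unique h2 tendsto_const_nhds
    norm_num at this
end

section
/- Every L-weakly compact subset of a Banach lattice E is an almost limited set. -/
open Filter Topology

section Lattice

variable {E : Type*} [NormedAddCommGroup E] [Lattice E] [HasSolidNorm E] [IsOrderedAddMonoid E] [NormedSpace ℝ E]

lemma lat_posneg (s : E) : (s ⊔ 0) ⊓ (-s ⊔ 0) = 0 := by
  have := posPart_inf_negPart_eq_zero s
  simpa [posPart, negPart] using this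

lemma lat_inf_add_le {a b c : E} (ha : 0 ≤ a) (hb : 0 ≤ b) (hc : 0 ≤ c) :
    a ⊓ (b + c) ≤ a ⊓ b + a ⊓ c := by
  have h1 : a ⊓ (b + c) ≤ a ⊓ b + c := by
    calc a ⊓ (b + c) ≤ (a + c) ⊓ (b + c) :=
          inf_le_inf_right _ (le_add_of_nonneg_right hc)
      _ = a ⊓ b + c := (inf_add a b c).symm
  have hab : (0:E) ≤ a ⊓ b := le_inf ha hb
  have h2 : a ⊓ (b + c) - a ⊓ b ≤ c := sub_le_iff_le_add.2 (by simpa [add_comm] using h1)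
  have h3 : a ⊓ (b + c) - a ⊓ b ≤ a :=
    le_trans (sub_le_self _ hab) inf_le_left
  have h4 : a ⊓ (b + c) - a ⊓ b ≤ a ⊓ c := le_inf h3 h2
  have := add_le_add_right h4 (a ⊓ b)
  simpa [sub_add_cancel, add_comm] using this

lemma lat_disj_nsmul {a b : E} (ha : 0 ≤ a) (hb : 0 ≤ b) (h : a ⊓ b = 0) (n : ℕ) :
    a ⊓ (n • b) = 0 := by
  induction n with
  | zero => simpa using inf_eq_right.2 ha
  | succ n ih =>
      have hnb : (0:E) ≤ n • b := nsmul_nonneg hb n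
      have h1 : a ⊓ ((n+1) • b) ≤ a ⊓ (n • b) + a ⊓ b := by
        have : (n+1) • b = n • b + b := succ_nsmul b n
        rw [this]
        exact lat_inf_add_le ha hnb hb
      have h2 : (0:E) ≤ a ⊓ ((n+1) • b) := le_inf ha (nsmul_nonneg hb (n+1))
      refine le_antisymm ?_ h2
      simpa [ih, h] using h1

lemma lat_disj_nsmul' {a b : E} (ha : 0 ≤ a) (hb : 0 ≤ b) (h : a ⊓ b = 0) (n m : ℕ) :
    (n • a) ⊓ (m • b) = 0 := by
  have h1 : a ⊓ (m • b) = 0 := lat_disj_nsmul ha hb h m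
  have h2 : (m • b) ⊓ a = 0 := by rwa [inf_comm] at h1
  have := lat_disj_nsmul (nsmul_nonneg hb m) ha h2 n
  rwa [inf_comm] at this

lemma lat_nsmul_nonpos {n : ℕ} (hn : 0 < n) {x : E} (h : n • x ≤ 0) : x ≤ 0 := by
  set p := x ⊔ 0 with hp
  set q := (-x) ⊔ 0 with hq
  have hpq : p ⊓ q = 0 := lat_posneg x
  have hx : x = p - q := by
    have := posPart_sub_negPart x
    simpa [posPart, negPart, hp, hq] using this.symm
  have hp0 : (0:E) ≤ p := le_sup_right
  have hq0 : (0:E) ≤ q := le_sup_right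
  have hle : n • p ≤ n • q := by
    have h1 : n • x = n • p - n • q := by rw [hx, smul_sub]
    have h2 : n • p - n • q ≤ 0 := by rw [← h1]; exact h
    exact sub_nonpos.1 h2
  have hz : (n • p) ⊓ (n • q) = 0 := lat_disj_nsmul' hp0 hq0 hpq n n
  have hp_eq : n • p = 0 := by
    have := inf_eq_left.2 hle
    rw [← this]; exact hz
  have hpz : p ≤ 0 := by
    have h1 : (1:ℕ) • p ≤ n • p := nsmul_le_nsmul_left hp0 hn
    simpa [hp_eq] using h1
  calc x ≤ x ⊔ 0 := le_sup_left
    _ ≤ 0 := hpz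

lemma lat_nsmul_le_cancel {n : ℕ} (hn : 0 < n) {x y : E} (h : n • x ≤ n • y) : x ≤ y := by
  have : n • (x - y) ≤ 0 := by rw [smul_sub]; exact sub_nonpos.2 h
  have := lat_nsmul_nonpos hn this
  exact sub_nonpos.1 this

lemma lat_inv_smul_nonneg {n : ℕ} (hn : 0 < n) {x : E} (hx : 0 ≤ x) :
    0 ≤ ((n:ℝ)⁻¹) • x := by
  have hne : (n:ℝ) ≠ 0 := Nat.cast_ne_zero.2 hn.ne'
  have key : n • (((n:ℝ)⁻¹) • x) = x := by
    rw [← Nat.cast_smul_eq_nsmul ℝ, smul_smul, mul_inv_cancel₀ hne, one_smul]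
  have h2 : n • (-(((n:ℝ)⁻¹) • x)) ≤ 0 := by
    rw [smul_neg, key]
    simpa using hx
  have h3 := lat_nsmul_nonpos hn h2
  simpa using h3

lemma lat_le_inv_smul {n : ℕ} (hn : 0 < n) {z v : E} (h : n • z ≤ v) :
    z ≤ ((n:ℝ)⁻¹) • v := by
  have hne : (n:ℝ) ≠ 0 := Nat.cast_ne_zero.2 hn.ne'
  have h0 : (0:E) ≤ v - n • z := sub_nonneg.2 h
  have h1 : 0 ≤ ((n:ℝ)⁻¹) • (v - n • z) := lat_inv_smul_nonneg hn h0
  have h2 : ((n:ℝ)⁻¹) • (v - n • z) = ((n:ℝ)⁻¹) • v - z := by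
    rw [smul_sub, ← Nat.cast_smul_eq_nsmul ℝ n z, smul_smul, inv_mul_cancel₀ hne, one_smul]
  rw [h2] at h1
  exact sub_nonneg.1 h1

lemma lat_pospart_sub (x y : E) : (x - y) ⊔ 0 = x - x ⊓ y := by
  have h1 : (x - y) ⊔ 0 = x ⊔ y - y := by
    have := sup_sub x y y
    simpa using this.symm
  rw [h1]
  have h2 : x ⊓ y + x ⊔ y = x + y := inf_add_sup x y
  have h3 : x ⊔ y = x + y - x ⊓ y := by
    rw [eq_sub_iff_add_eq, ← h2]; abel
  rw [h3]; abel

lemma lat_pospart_nsmul (n : ℕ) (s : E) : (n • s) ⊔ 0 = n • (s ⊔ 0) := by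
  set p := s ⊔ 0 with hp
  set q := (-s) ⊔ 0 with hq
  have hpq : p ⊓ q = 0 := lat_posneg s
  have hp0 : (0:E) ≤ p := le_sup_right
  have hq0 : (0:E) ≤ q := le_sup_right
  have hs : s = p - q := by
    have := posPart_sub_negPart s
    simpa [posPart, negPart, hp, hq] using this.symm
  have hd : (n • p) ⊓ (n • q) = 0 := lat_disj_nsmul' hp0 hq0 hpq n n
  calc (n • s) ⊔ 0 = (n • p - n • q) ⊔ 0 := by rw [hs, smul_sub]
    _ = n • p - (n • p) ⊓ (n • q) := lat_pospart_sub _ _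
    _ = n • p := by rw [hd, sub_zero]

/-- key overlap estimate: `K • (a ⊓ ((b - K•a) ⊔ 0)) ≤ b` for positive `a, b`. -/
lemma lat_overlap (K : ℕ) {a b : E} (ha : 0 ≤ a) (hb : 0 ≤ b) :
    K • (a ⊓ ((b - K • a) ⊔ 0)) ≤ b := by
  set r := (b - K • a) ⊔ 0 with hr
  have hr0 : (0:E) ≤ r := le_sup_right
  have hw : K • (a ⊓ r) ≤ (K • a) ⊓ (K • r) :=
    le_inf (nsmul_le_nsmul_right inf_le_left K) (nsmul_le_nsmul_right inf_le_right K)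
  refine le_trans hw ?_
  -- show (K•a) ⊓ (K•r) ≤ b
  set k1 := K • a with hk1
  have hKr : K • r = (K • b - K • k1) ⊔ 0 := by
    rw [hr, ← lat_pospart_nsmul, smul_sub]
  set beta := (k1 - b) ⊔ 0 with hbeta
  have hrb : r = (b - k1) ⊔ 0 := by rw [hr]
  have hdisj : beta ⊓ r = 0 := by
    rw [hbeta, hrb]
    have := lat_posneg (k1 - b)
    simpa [neg_sub] using this
  have hbeta0 : (0:E) ≤ beta := le_sup_right
  have hdisjK : beta ⊓ (K • r) = 0 := lat_disj_nsmul hbeta0 hr0 hdisj K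
  have h1 : k1 - b ≤ beta := le_sup_left
  have h2 : K • r - b ≤ K • r := sub_le_self _ hb
  have h3 : (k1 - b) ⊓ (K • r - b) ≤ beta ⊓ (K • r) := inf_le_inf h1 h2
  rw [hdisjK] at h3
  have h4 : (k1 - b) ⊓ (K • r - b) = k1 ⊓ (K • r) - b := (inf_sub k1 (K • r) b).symm
  rw [h4] at h3
  exact sub_nonpos.1 h3

lemma lat_disj_sub_inf (a b : E) : (a - a ⊓ b) ⊓ (b - a ⊓ b) = 0 := by
  rw [← inf_sub]
  simp

lemma norm_mono_of_le {a b : E} (ha : 0 ≤ a) (h : a ≤ b) : ‖a‖ ≤ ‖b‖ := by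
  have hb : 0 ≤ b := le_trans ha h
  have : |a| ≤ |b| := by rwa [abs_of_nonneg ha, abs_of_nonneg hb]
  exact HasSolidNorm.solid this

end Lattice

section AV

set_option linter.unusedSectionVars false

variable {E : Type*} [NormedAddCommGroup E] [Lattice E] [HasSolidNorm E] [IsOrderedAddMonoid E] [NormedSpace ℝ E]

lemma av_set_nonempty (f : E →L[ℝ] ℝ) {x : E} (hx : 0 ≤ x) :
    ((fun y => f y) '' {y | |y| ≤ x}).Nonempty :=
  ⟨f 0, ⟨0, by simpa using hx, rfl⟩⟩

lemma av_set_bdd (f : E →L[ℝ] ℝ) {x : E} (hx : 0 ≤ x) :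
    BddAbove ((fun y => f y) '' {y | |y| ≤ x}) := by
  refine ⟨‖f‖ * ‖x‖, ?_⟩
  rintro v ⟨y, hy, rfl⟩
  have h1 : ‖y‖ ≤ ‖x‖ := by
    have : |y| ≤ |x| := by rwa [abs_of_nonneg hx]
    exact HasSolidNorm.solid this
  calc f y ≤ ‖f y‖ := le_abs_self _
    _ ≤ ‖f‖ * ‖y‖ := f.le_opNorm y
    _ ≤ ‖f‖ * ‖x‖ := by
        exact mul_le_mul_of_nonneg_left h1 (norm_nonneg f)

lemma av_mem_le (f : E →L[ℝ] ℝ) {x y : E} (hx : 0 ≤ x) (hy : |y| ≤ x) :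
    f y ≤ absVal f x :=
  le_csSup (av_set_bdd f hx) ⟨y, hy, rfl⟩

lemma av_nonneg (f : E →L[ℝ] ℝ) {x : E} (hx : 0 ≤ x) : 0 ≤ absVal f x := by
  have := av_mem_le f hx (y := 0) (by simpa using hx)
  simpa using this

lemma abs_le_av (f : E →L[ℝ] ℝ) {x y : E} (hx : 0 ≤ x) (hy : |y| ≤ x) :
    |f y| ≤ absVal f x := by
  rcases abs_cases (f y) with ⟨h, _⟩ | ⟨h, _⟩
  · rw [h]; exact av_mem_le f hx hy
  · rw [h]
    have : f (-y) ≤ absVal f x := av_mem_le f hx (by simpa using hy)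
    simpa using this

lemma av_le_opNorm (f : E →L[ℝ] ℝ) {x : E} (hx : 0 ≤ x) :
    absVal f x ≤ ‖f‖ * ‖x‖ :=
  csSup_le (av_set_nonempty f hx) (fun v hv => by
    rcases hv with ⟨y, hy, rfl⟩
    have h1 : ‖y‖ ≤ ‖x‖ := by
      have : |y| ≤ |x| := by rwa [abs_of_nonneg hx]
      exact HasSolidNorm.solid this
    calc f y ≤ ‖f y‖ := le_abs_self _
      _ ≤ ‖f‖ * ‖y‖ := f.le_opNorm y
      _ ≤ ‖f‖ * ‖x‖ := mul_le_mul_of_nonneg_left h1 (norm_nonneg f))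

lemma av_mono (f : E →L[ℝ] ℝ) {x x' : E} (hx : 0 ≤ x) (h : x ≤ x') :
    absVal f x ≤ absVal f x' := by
  have hx' : 0 ≤ x' := le_trans hx h
  exact csSup_le_csSup (av_set_bdd f hx') (av_set_nonempty f hx)
    (Set.image_mono (fun y hy => le_trans hy h))

lemma av_superadd (f : E →L[ℝ] ℝ) {x x' : E} (hx : 0 ≤ x) (hx' : 0 ≤ x') :
    absVal f x + absVal f x' ≤ absVal f (x + x') := by
  rw [← sub_nonneg, ← sub_sub]
  have h1 : absVal f x ≤ absVal f (x + x') - absVal f x' := by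
    refine csSup_le (av_set_nonempty f hx) ?_
    rintro v ⟨y, hy, rfl⟩
    rw [le_sub_iff_add_le]
    have h2 : absVal f x' ≤ absVal f (x + x') - f y := by
      refine csSup_le (av_set_nonempty f hx') ?_
      rintro w ⟨y', hy', rfl⟩
      rw [le_sub_iff_add_le]
      have hsum : |y + y'| ≤ x + x' :=
        le_trans (abs_add_le y y') (add_le_add hy hy')
      have := av_mem_le f (by positivity) hsum
      simpa [add_comm] using this
    linarith
  linarith

/-- Riesz decomposition. -/
lemma riesz_decomp {z v w : E} (hv : 0 ≤ v) (hw : 0 ≤ w) (hz : |z| ≤ v + w) :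
    ∃ z₁ z₂ : E, z = z₁ + z₂ ∧ |z₁| ≤ v ∧ |z₂| ≤ w := by
  set z₂ := ((z - v) ⊔ 0) ⊓ (z + v) with hz2
  have hzlow : -(v + w) ≤ z := by
    have h1 : -z ≤ |z| := neg_le_abs z
    have h2 : -z ≤ v + w := le_trans h1 hz
    simpa using neg_le_neg h2
  refine ⟨z - z₂, z₂, by abel, ?_, ?_⟩
  · rw [abs_le']
    constructor
    · -- z - z₂ ≤ v ⟺ z - v ≤ z₂
      rw [sub_le_comm]
      refine le_inf le_sup_left ?_
      have : z + (-v) ≤ z + v := add_le_add_right (neg_le_self hv) z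
      simpa [sub_eq_add_neg] using this
    · -- -(z - z₂) ≤ v  ⟺  z₂ ≤ v + z
      rw [neg_sub, sub_le_iff_le_add]
      calc z₂ ≤ z + v := inf_le_right
        _ = v + z := by abel
  · rw [abs_le']
    constructor
    · refine le_trans inf_le_left (sup_le ?_ hw)
      rw [sub_le_iff_le_add]
      calc z ≤ |z| := le_abs_self z
        _ ≤ v + w := hz
        _ = w + v := by abel
    · rw [neg_le]
      refine le_inf (le_trans (neg_nonpos_of_nonneg hw) le_sup_right) ?_
      have h1 : -w = -(v+w) + v := by abel
      rw [h1]
      exact add_le_add_left hzlow v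

lemma av_subadd (f : E →L[ℝ] ℝ) {x x' : E} (hx : 0 ≤ x) (hx' : 0 ≤ x') :
    absVal f (x + x') ≤ absVal f x + absVal f x' := by
  refine csSup_le (av_set_nonempty f (by positivity)) ?_
  rintro v ⟨z, hzmem, rfl⟩
  obtain ⟨z₁, z₂, rfl, h1, h2⟩ := riesz_decomp hx hx' hzmem
  have e1 : f z₁ ≤ absVal f x := av_mem_le f hx h1
  have e2 : f z₂ ≤ absVal f x' := av_mem_le f hx' h2
  calc f (z₁ + z₂) = f z₁ + f z₂ := map_add f z₁ z₂
    _ ≤ absVal f x + absVal f x' := add_le_add e1 e2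

lemma av_add (f : E →L[ℝ] ℝ) {x x' : E} (hx : 0 ≤ x) (hx' : 0 ≤ x') :
    absVal f (x + x') = absVal f x + absVal f x' :=
  le_antisymm (av_subadd f hx hx') (av_superadd f hx hx')

lemma av_nsmul (f : E →L[ℝ] ℝ) (n : ℕ) {x : E} (hx : 0 ≤ x) :
    absVal f (n • x) = n * absVal f x := by
  induction n with
  | zero =>
      simp only [zero_smul, Nat.cast_zero, zero_mul]
      have hset : {y : E | |y| ≤ 0} = {0} := by
        ext y
        simp only [Set.mem_setOf_eq, Set.mem_singleton_iff]
        constructor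
        · intro h
          have h1 : y ≤ 0 := le_trans (le_abs_self y) h
          have h2 : -y ≤ 0 := le_trans (neg_le_abs y) h
          have h3 : 0 ≤ y := by simpa using neg_le_neg h2
          exact le_antisymm h1 h3
        · rintro rfl; simp
      rw [absVal, hset]
      simp
  | succ n ih =>
      have h1 : (n+1) • x = n • x + x := succ_nsmul x n
      rw [h1, av_add f (nsmul_nonneg hx n) hx, ih]
      push_cast; ring

lemma av_inv_nsmul (f : E →L[ℝ] ℝ) {n : ℕ} (hn : 0 < n) {x : E} (hx : 0 ≤ x) :
    absVal f (((n:ℝ)⁻¹) • x) = absVal f x / n := by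
  have hne : (n:ℝ) ≠ 0 := Nat.cast_ne_zero.2 hn.ne'
  have hx' : 0 ≤ ((n:ℝ)⁻¹) • x := lat_inv_smul_nonneg hn hx
  have key : n • (((n:ℝ)⁻¹) • x) = x := by
    rw [← Nat.cast_smul_eq_nsmul ℝ, smul_smul, mul_inv_cancel₀ hne, one_smul]
  have h1 : absVal f x = n * absVal f (((n:ℝ)⁻¹) • x) := by
    rw [← key, av_nsmul f n hx', key]
  rw [h1]; field_simp

lemma av_lipschitz (f : E →L[ℝ] ℝ) {x x' : E} (hx : 0 ≤ x) (hx' : 0 ≤ x') :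
    absVal f x ≤ absVal f x' + ‖f‖ * ‖x - x'‖ := by
  have h1 : x ≤ x' + |x - x'| := by
    have h' : x - x' ≤ |x - x'| := le_abs_self _
    have := add_le_add_right h' x'
    simpa using this
  have h2 : absVal f x ≤ absVal f (x' + |x - x'|) := av_mono f hx h1
  have h3 : absVal f (x' + |x - x'|) = absVal f x' + absVal f |x - x'| :=
    av_add f hx' (abs_nonneg _)
  have h4 : absVal f |x - x'| ≤ ‖f‖ * ‖(|x - x'|)‖ := av_le_opNorm f (abs_nonneg _)
  rw [norm_abs_eq_norm] at h4
  calc absVal f x ≤ absVal f x' + absVal f |x - x'| := by rw [← h3]; exact h2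
    _ ≤ absVal f x' + ‖f‖ * ‖x - x'‖ := by exact add_le_add_right h4 _

lemma av_witness (f : E →L[ℝ] ℝ) {x : E} (hx : 0 ≤ x) {c : ℝ} (hc : c < absVal f x) :
    ∃ y : E, |y| ≤ x ∧ c < f y := by
  obtain ⟨v, hv, hcv⟩ := exists_lt_of_lt_csSup (av_set_nonempty f hx) hc
  rcases hv with ⟨y, hy, rfl⟩
  exact ⟨y, hy, hcv⟩

end AV

section Split

set_option linter.unusedSectionVars false

variable {E : Type*} [NormedAddCommGroup E] [Lattice E] [HasSolidNorm E] [IsOrderedAddMonoid E] [NormedSpace ℝ E]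

lemma av_zero (f : E →L[ℝ] ℝ) : absVal f 0 = 0 := by
  have := av_nsmul f 0 (le_refl (0:E))
  simpa using this

lemma fd_split {f g : E →L[ℝ] ℝ} (h : FunDisjoint f g) {x : E} (hx : 0 ≤ x)
    {γ : ℝ} (hγ : 0 < γ) :
    ∃ y : E, 0 ≤ y ∧ y ≤ x ∧ absVal f y + absVal g (x - y) < γ := by
  have h0 := h x hx
  set S := ((fun y => absVal f y + absVal g (x - y)) '' {y | 0 ≤ y ∧ y ≤ x}) with hS
  have hne : S.Nonempty := ⟨absVal f 0 + absVal g (x - 0), ⟨0, ⟨le_refl _, hx⟩, rfl⟩⟩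
  have hlt : sInf S < γ := by rw [h0]; exact hγ
  obtain ⟨v, hv, hvγ⟩ := exists_lt_of_csInf_lt hne hlt
  rcases hv with ⟨y, ⟨hy0, hyx⟩, rfl⟩
  exact ⟨y, hy0, hyx, hvγ⟩

lemma av_sum_le (f : E →L[ℝ] ℝ) (y : ℕ → E) (hy : ∀ j, 0 ≤ y j) (F : Finset ℕ) :
    ∑ j ∈ F, absVal f (y j) ≤ absVal f (∑ j ∈ F, y j) := by
  classical
  induction F using Finset.induction_on with
  | empty => simp [av_zero]
  | @insert a F ha ih =>
      rw [Finset.sum_insert ha, Finset.sum_insert ha]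
      have h1 : absVal f (y a + ∑ j ∈ F, y j) =
          absVal f (y a) + absVal f (∑ j ∈ F, y j) :=
        av_add f (hy a) (Finset.sum_nonneg fun j _ => hy j)
      rw [h1]
      exact add_le_add_right ih _

lemma sum_av_le (f : E →L[ℝ] ℝ) (y : ℕ → E) (hy : ∀ j, 0 ≤ y j) (F : Finset ℕ) :
    absVal f (∑ j ∈ F, y j) ≤ ∑ j ∈ F, absVal f (y j) :=
  le_of_eq_of_le (le_antisymm (le_of_eq rfl) (le_refl _)).symm (by
    classical
    induction F using Finset.induction_on with
    | empty => simp [av_zero]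
    | @insert a F ha ih =>
        rw [Finset.sum_insert ha, Finset.sum_insert ha,
          av_add f (hy a) (Finset.sum_nonneg fun j _ => hy j)]
        exact add_le_add_right ih _)

/-- Every disjoint sequence in `[0, u]` is norm null. -/
def DisjNullOn (u : E) : Prop :=
  ∀ z : ℕ → E, (∀ n, 0 ≤ z n) → (∀ n, z n ≤ u) →
    Pairwise (fun m n => z m ⊓ z n = 0) → Tendsto (fun n => ‖z n‖) atTop (𝓝 0)

lemma disjNullOn_zero : DisjNullOn (0 : E) := by
  intro z hz0 hzu _
  have : ∀ n, z n = 0 := fun n => le_antisymm (hzu n) (hz0 n)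
  have h2 : (fun n => ‖z n‖) = fun _ => (0:ℝ) := by
    funext n; rw [this n, norm_zero]
  rw [h2]
  exact tendsto_const_nhds

lemma disjNullOn_add {v w : E} (hv : 0 ≤ v) (hw : 0 ≤ w)
    (h1 : DisjNullOn v) (h2 : DisjNullOn w) : DisjNullOn (v + w) := by
  intro z hz0 hzu hdisj
  set z1 := fun n => z n ⊓ v with hz1
  set z2 := fun n => z n - z n ⊓ v with hz2
  have hz10 : ∀ n, 0 ≤ z1 n := fun n => le_inf (hz0 n) hv
  have hz1v : ∀ n, z1 n ≤ v := fun n => inf_le_right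
  have hz20 : ∀ n, 0 ≤ z2 n := fun n => sub_nonneg.2 inf_le_left
  have hz2z : ∀ n, z2 n ≤ z n := fun n => sub_le_self _ (hz10 n)
  have hz2w : ∀ n, z2 n ≤ w := by
    intro n
    have e1 : z n - z n ⊓ v = (z n - v) ⊔ 0 := (lat_pospart_sub (z n) v).symm
    rw [hz2]; dsimp only; rw [e1]
    refine sup_le ?_ hw
    have : z n ≤ v + w := hzu n
    rw [sub_le_iff_le_add]
    calc z n ≤ v + w := this
      _ = w + v := by abel
  have hd1 : Pairwise (fun m n => z1 m ⊓ z1 n = 0) := by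
    intro m n hmn
    refine le_antisymm ?_ (le_inf (hz10 m) (hz10 n))
    calc z1 m ⊓ z1 n ≤ z m ⊓ z n := inf_le_inf inf_le_left inf_le_left
      _ = 0 := hdisj hmn
  have hd2 : Pairwise (fun m n => z2 m ⊓ z2 n = 0) := by
    intro m n hmn
    refine le_antisymm ?_ (le_inf (hz20 m) (hz20 n))
    calc z2 m ⊓ z2 n ≤ z m ⊓ z n := inf_le_inf (hz2z m) (hz2z n)
      _ = 0 := hdisj hmn
  have t1 := h1 z1 hz10 hz1v hd1
  have t2 := h2 z2 hz20 hz2w hd2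
  have hzeq : ∀ n, z n = z1 n + z2 n := by
    intro n; rw [hz1, hz2]; dsimp only; abel
  have hbound : ∀ n, ‖z n‖ ≤ ‖z1 n‖ + ‖z2 n‖ := by
    intro n; rw [hzeq n]; exact norm_add_le _ _
  have hsum : Tendsto (fun n => ‖z1 n‖ + ‖z2 n‖) atTop (𝓝 0) := by
    have := t1.add t2; simpa using this
  exact squeeze_zero (fun n => norm_nonneg _) hbound hsum

lemma disjNullOn_nsmul {v : E} (hv : 0 ≤ v) (h : DisjNullOn v) (K : ℕ) :
    DisjNullOn (K • v) := by
  induction K with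
  | zero => simpa using disjNullOn_zero
  | succ K ih =>
      have : (K+1) • v = K • v + v := succ_nsmul v K
      rw [this]
      exact disjNullOn_add (nsmul_nonneg hv K) hv ih h

end Split

section CoreU

set_option linter.unusedSectionVars false
set_option maxHeartbeats 1000000

variable {E : Type*} [NormedAddCommGroup E] [Lattice E] [HasSolidNorm E] [IsOrderedAddMonoid E] [NormedSpace ℝ E] [CompleteSpace E]

lemma core_sum_bounded {u : E} (hu : 0 ≤ u) (hdn : DisjNullOn u)
    (y : ℕ → E) (hy0 : ∀ j, 0 ≤ y j)
    (hsum : ∀ F : Finset ℕ, ∑ j ∈ F, y j ≤ u)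
    {ε : ℝ} (hε : 0 < ε) (hybig : ∀ j, ε ≤ ‖y j‖) : False := by
  have hyu : ∀ j, y j ≤ u := by
    intro j; have := hsum {j}; simpa using this
  have hyne : ∀ j, y j ≠ 0 := by
    intro j h
    have := hybig j; rw [h, norm_zero] at this; linarith
  have hgex : ∀ j, ∃ g : E →L[ℝ] ℝ, ‖g‖ = 1 ∧ g (y j) = ‖y j‖ := by
    intro j
    obtain ⟨g, hga, hgb⟩ := exists_dual_vector ℝ (y j) (norm_ne_zero_iff.mpr (hyne j))
    exact ⟨g, hga, by simpa using hgb⟩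
  choose g hg1 hg2 using hgex
  have hub : ∀ (i : ℕ) {v : E}, 0 ≤ v → v ≤ u → absVal (g i) v ≤ ‖u‖ := by
    intro i v hv0 hvu
    calc absVal (g i) v ≤ ‖g i‖ * ‖v‖ := av_le_opNorm _ hv0
      _ = ‖v‖ := by rw [hg1 i, one_mul]
      _ ≤ ‖u‖ := norm_mono_of_le hv0 hvu
  set 𝒰 := (Filter.hyperfilter ℕ : Ultrafilter ℕ) with h𝒰
  have hatTop : ∀ {p : ℕ → Prop}, (∀ᶠ i in atTop, p i) → ∀ᶠ i in (𝒰 : Filter ℕ), p i := by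
    intro p hp
    refine hp.filter_mono ?_
    calc (𝒰 : Filter ℕ) ≤ Filter.cofinite := Filter.hyperfilter_le_cofinite
      _ = atTop := Nat.cofinite_eq_atTop
  have hcex : ∀ j, ∃ cj : ℝ, cj ∈ Set.Icc (0:ℝ) ‖u‖ ∧
      Tendsto (fun i => absVal (g i) (y j)) (𝒰 : Filter ℕ) (𝓝 cj) := by
    intro j
    have hle : (𝒰.map (fun i => absVal (g i) (y j)) : Filter ℝ) ≤ 𝓟 (Set.Icc (0:ℝ) ‖u‖) := by
      rw [Filter.le_principal_iff]
      refine Filter.mem_map.2 (Filter.univ_mem' ?_)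
      intro i
      exact ⟨av_nonneg _ (hy0 j), hub i (hy0 j) (hyu j)⟩
    obtain ⟨cj, hcj1, hcj2⟩ := isCompact_Icc.ultrafilter_le_nhds _ hle
    exact ⟨cj, hcj1, hcj2⟩
  choose c hc1 hc2 using hcex
  have hc0 : ∀ j, 0 ≤ c j := fun j => (hc1 j).1
  have hcsum : ∀ F : Finset ℕ, ∑ j ∈ F, c j ≤ ‖u‖ := by
    intro F
    have hT : Tendsto (fun i => ∑ j ∈ F, absVal (g i) (y j)) (𝒰 : Filter ℕ)
        (𝓝 (∑ j ∈ F, c j)) := tendsto_finset_sum F (fun j _ => hc2 j)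
    refine le_of_tendsto hT (Filter.Eventually.of_forall ?_)
    intro i
    calc ∑ j ∈ F, absVal (g i) (y j) ≤ absVal (g i) (∑ j ∈ F, y j) :=
          av_sum_le (g i) y hy0 F
      _ ≤ absVal (g i) u := av_mono _ (Finset.sum_nonneg fun j _ => hy0 j) (hsum F)
      _ ≤ ‖u‖ := hub i hu (le_refl u)
  have hcsummable : Summable c := summable_of_sum_le hc0 hcsum
  have hctend : Tendsto c atTop (𝓝 0) := hcsummable.tendsto_atTop_zero
  -- the selection of the subsequence
  have hsel : ∀ s : Finset (ℕ × ℕ), (∀ q ∈ s, c q.2 < ε / 2^(2*q.1+4)) →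
      ∃ b : ℕ × ℕ, (c b.2 < ε / 2^(2*b.1+4)) ∧
        ∀ q ∈ s, q.1 < b.1 ∧ q.2 < b.2 ∧ absVal (g b.2) (y q.2) < ε / 2^(2*q.1+3) := by
    intro s hs
    set Q := (s.sup (fun q => q.1)) + 1 with hQ
    have ha : ∀ᶠ i in (𝒰 : Filter ℕ), c i < ε / 2^(2*Q+4) := by
      refine hatTop ?_
      have hpos : (0:ℝ) < ε / 2^(2*Q+4) := by positivity
      exact hctend.eventually_lt_const hpos
    have hb : ∀ᶠ i in (𝒰 : Filter ℕ), ∀ q ∈ s, q.2 < i ∧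
        absVal (g i) (y q.2) < ε / 2^(2*q.1+3) := by
      rw [Filter.eventually_all_finset]
      intro q hq
      have h1 : ∀ᶠ i in (𝒰 : Filter ℕ), q.2 < i := hatTop (Filter.eventually_gt_atTop q.2)
      have h2 : ∀ᶠ i in (𝒰 : Filter ℕ), absVal (g i) (y q.2) < ε / 2^(2*q.1+3) := by
        refine (hc2 q.2).eventually_lt_const ?_
        have := hs q hq
        have h3 : ε / 2^(2*q.1+4) < ε / 2^(2*q.1+3) := by
          apply div_lt_div_of_pos_left hε (by positivity)
          have : (2:ℝ)^(2*q.1+3) < 2^(2*q.1+4) := by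
            apply pow_lt_pow_right₀ one_lt_two (by omega)
          linarith
        linarith
      exact h1.and h2
    obtain ⟨i, hia, hib⟩ := (ha.and hb).exists
    refine ⟨(Q, i), hia, ?_⟩
    intro q hq
    refine ⟨?_, (hib q hq).1, (hib q hq).2⟩
    have : q.1 ≤ s.sup (fun q => q.1) := Finset.le_sup hq
    omega
  obtain ⟨F, hFP, hFr⟩ := exists_seq_of_forall_finset_exists
    (fun q : ℕ × ℕ => c q.2 < ε / 2^(2*q.1+4))
    (fun a b => a.1 < b.1 ∧ a.2 < b.2 ∧ absVal (g b.2) (y a.2) < ε / 2^(2*a.1+3))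
    (fun s hs => hsel s hs)
  have hposmono : StrictMono (fun t => (F t).1) := fun a b h => (hFr a b h).1
  have hpos_ge : ∀ t, t ≤ (F t).1 := fun t => hposmono.le_apply
  set J : ℕ → ℕ := fun t => (F t).2 with hJ
  set Y : ℕ → E := fun t => y (J t) with hY
  set G : ℕ → E →L[ℝ] ℝ := fun t => g (J t) with hG
  have hY0 : ∀ t, 0 ≤ Y t := fun t => hy0 _
  have hYu : ∀ t, Y t ≤ u := fun t => hyu _
  have hsmall : ∀ s t, s < t → absVal (G t) (Y s) < ε / 2^(2*s+3) := by
    intro s t hst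
    have h1 := (hFr s t hst).2.2
    have h2 : ε / 2^(2*(F s).1+3) ≤ ε / 2^(2*s+3) := by
      apply div_le_div_of_nonneg_left hε.le (by positivity)
      exact pow_le_pow_right₀ one_le_two (by have := hpos_ge s; omega)
    calc absVal (G t) (Y s) < ε / 2^(2*(F s).1+3) := h1
      _ ≤ ε / 2^(2*s+3) := h2
  have hbig : ∀ t, ε ≤ absVal (G t) (Y t) := by
    intro t
    have h1 : G t (Y t) = ‖Y t‖ := hg2 (J t)
    have h2 : G t (Y t) ≤ absVal (G t) (Y t) :=
      av_mem_le _ (hY0 t) (by rw [abs_of_nonneg (hY0 t)])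
    calc ε ≤ ‖Y t‖ := hybig (J t)
      _ = G t (Y t) := h1.symm
      _ ≤ absVal (G t) (Y t) := h2
  -- the disjoint sequence
  set m : ℕ → E := fun t =>
    (∑ s ∈ Finset.range t, (2^s : ℕ) • Y s) + (((2^t : ℕ):ℝ)⁻¹) • u with hm
  set d : ℕ → E := fun t => (Y t - m t) ⊔ 0 with hd
  have hinv0 : ∀ t : ℕ, 0 ≤ (((2^t : ℕ):ℝ)⁻¹) • u :=
    fun t => lat_inv_smul_nonneg (pow_pos two_pos t) hu
  have hsum0 : ∀ t : ℕ, (0:E) ≤ ∑ s ∈ Finset.range t, (2^s : ℕ) • Y s :=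
    fun t => Finset.sum_nonneg (fun s _ => nsmul_nonneg (hY0 s) _)
  have hm0 : ∀ t, 0 ≤ m t := fun t => add_nonneg (hsum0 t) (hinv0 t)
  have hd0 : ∀ t, 0 ≤ d t := fun t => le_sup_right
  have hdY : ∀ t, d t ≤ Y t := fun t => sup_le (sub_le_self _ (hm0 t)) (hY0 t)
  have hdu : ∀ t, d t ≤ u := fun t => le_trans (hdY t) (hYu t)
  have hkey : ∀ t : ℕ, (2^t : ℕ) • ((((2^t : ℕ):ℝ)⁻¹) • u) = u := by
    intro t
    have hne : ((2^t : ℕ):ℝ) ≠ 0 := by positivity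
    rw [← Nat.cast_smul_eq_nsmul ℝ, smul_smul, mul_inv_cancel₀ hne, one_smul]
  have hdisj : Pairwise (fun s t => d s ⊓ d t = 0) := by
    have key : ∀ s t, s < t → d s ⊓ d t ≤ 0 := by
      intro s t hst
      set w : E := Y s - (((2^s : ℕ):ℝ)⁻¹) • u with hw
      have e1 : d s ≤ w ⊔ 0 := by
        refine sup_le_sup_right ?_ 0
        rw [hw]
        apply sub_le_sub_left
        exact le_add_of_nonneg_left (hsum0 s)
      have e2 : d t ≤ (Y t - (2^s : ℕ) • Y s) ⊔ 0 := by
        refine sup_le_sup_right ?_ 0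
        apply sub_le_sub_left
        refine le_add_of_le_of_nonneg ?_ (hinv0 t)
        exact Finset.single_le_sum (f := fun s => (2^s : ℕ) • Y s)
          (fun i _ => nsmul_nonneg (hY0 i) _) (Finset.mem_range.2 hst)
      have e3 : (Y t - (2^s : ℕ) • Y s) ⊔ 0 ≤ (2^s : ℕ) • ((-w) ⊔ 0) := by
        have h1 : Y t - (2^s : ℕ) • Y s ≤ (2^s : ℕ) • (-w) := by
          rw [hw, neg_sub, smul_sub, hkey s]
          exact sub_le_sub_right (hYu t) _
        calc (Y t - (2^s : ℕ) • Y s) ⊔ 0 ≤ ((2^s : ℕ) • (-w)) ⊔ 0 :=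
              sup_le_sup_right h1 0
          _ = (2^s : ℕ) • ((-w) ⊔ 0) := lat_pospart_nsmul _ _
      have e4 : (w ⊔ 0) ⊓ ((2^s : ℕ) • ((-w) ⊔ 0)) = 0 :=
        lat_disj_nsmul le_sup_right le_sup_right (lat_posneg w) _
      calc d s ⊓ d t ≤ (w ⊔ 0) ⊓ ((2^s : ℕ) • ((-w) ⊔ 0)) :=
            inf_le_inf e1 (le_trans e2 e3)
        _ = 0 := e4
    intro s t hst
    rcases lt_or_gt_of_ne hst with h | h
    · exact le_antisymm (key s t h) (le_inf (hd0 s) (hd0 t))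
    · rw [inf_comm]
      exact le_antisymm (key t s h) (le_inf (hd0 t) (hd0 s))
  -- mass estimate
  have hmass : ∀ t : ℕ, ε - ε/4 - ‖u‖/2^t ≤ ‖d t‖ := by
    intro t
    have hYle : Y t ≤ d t + m t := by
      have h0 : Y t - m t ≤ d t := le_sup_left
      have := add_le_add_left h0 (m t)
      simpa using this
    have h1 : absVal (G t) (Y t) ≤ absVal (G t) (d t) + absVal (G t) (m t) :=
      calc absVal (G t) (Y t) ≤ absVal (G t) (d t + m t) := av_mono _ (hY0 t) hYle
        _ ≤ _ := av_subadd _ (hd0 t) (hm0 t)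
    have h4 : absVal (G t) (∑ s ∈ Finset.range t, (2^s:ℕ) • Y s)
        ≤ ∑ s ∈ Finset.range t, absVal (G t) ((2^s:ℕ) • Y s) :=
      sum_av_le _ _ (fun s => nsmul_nonneg (hY0 s) _) _
    have h5 : ∀ s ∈ Finset.range t, absVal (G t) ((2^s:ℕ) • Y s) ≤ ε / 2^(s+3) := by
      intro s hs
      rw [av_nsmul _ _ (hY0 s)]
      have hle := (hsmall s t (Finset.mem_range.1 hs)).le
      have hpow : (2:ℝ)^(2*s+3) = 2^s * 2^(s+3) := by
        rw [← pow_add]; congr 1; omega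
      calc ((2^s:ℕ):ℝ) * absVal (G t) (Y s) ≤ (2^s:ℝ) * (ε / 2^(2*s+3)) := by
            push_cast
            exact mul_le_mul_of_nonneg_left hle (by positivity)
        _ = ε / 2^(s+3) := by
            rw [hpow, mul_div_assoc']
            exact mul_div_mul_left ε _ (by positivity)
    have h6 : ∑ s ∈ Finset.range t, (ε / 2^(s+3) : ℝ) ≤ ε/4 := by
      have he : ∀ s : ℕ, (ε / 2^(s+3) : ℝ) = (ε/8) * (1/2)^s := by
        intro s
        have hpow : (2:ℝ)^(s+3) = 2^s * 8 := by
          rw [pow_add]; norm_num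
        rw [hpow, div_pow, one_pow, mul_one_div, div_div, mul_comm (8:ℝ) ((2:ℝ)^s)]
      calc ∑ s ∈ Finset.range t, (ε / 2^(s+3) : ℝ)
          = (ε/8) * ∑ s ∈ Finset.range t, ((1:ℝ)/2)^s := by
            rw [Finset.mul_sum]
            exact Finset.sum_congr rfl (fun s _ => he s)
        _ ≤ (ε/8) * 2 := by
            have := sum_geometric_two_le t
            exact mul_le_mul_of_nonneg_left this (by positivity)
        _ = ε/4 := by ring
    have h7 : absVal (G t) ((((2^t:ℕ):ℝ)⁻¹) • u) ≤ ‖u‖/2^t := by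
      have heq := av_inv_nsmul (G t) (n := 2^t) (pow_pos two_pos t) hu
      rw [heq]
      have havu : absVal (G t) u ≤ ‖u‖ := hub (J t) hu (le_refl u)
      have hp : (0:ℝ) < ((2^t : ℕ):ℝ) := by positivity
      calc absVal (G t) u / ((2^t : ℕ):ℝ) ≤ ‖u‖ / ((2^t : ℕ):ℝ) := by
            gcongr
        _ = ‖u‖/2^t := by push_cast; ring
    have h2 : absVal (G t) (m t) ≤ ε/4 + ‖u‖/2^t := by
      have h3 : absVal (G t) (m t) ≤
          absVal (G t) (∑ s ∈ Finset.range t, (2^s:ℕ) • Y s) +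
            absVal (G t) ((((2^t:ℕ):ℝ)⁻¹) • u) :=
        av_subadd _ (hsum0 t) (hinv0 t)
      have h45 : absVal (G t) (∑ s ∈ Finset.range t, (2^s:ℕ) • Y s) ≤ ε/4 :=
        le_trans h4 (le_trans (Finset.sum_le_sum h5) h6)
      linarith
    have h9 : absVal (G t) (d t) ≤ ‖d t‖ := by
      calc absVal (G t) (d t) ≤ ‖G t‖ * ‖d t‖ := av_le_opNorm _ (hd0 t)
        _ = ‖d t‖ := by rw [hg1 (J t)]; ring
    have := hbig t
    linarith
  -- contradiction
  have hTd := hdn d hd0 hdu hdisj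
  have h8 : Tendsto (fun t : ℕ => ‖u‖/2^t) atTop (𝓝 0) := by
    have h81 : Tendsto (fun t : ℕ => ‖u‖ * (1/2:ℝ)^t) atTop (𝓝 (‖u‖ * 0)) :=
      (tendsto_pow_atTop_nhds_zero_of_lt_one (by norm_num) (by norm_num)).const_mul ‖u‖
    have : (fun t : ℕ => ‖u‖/2^t) = fun t : ℕ => ‖u‖ * (1/2:ℝ)^t := by
      funext t; rw [div_pow]; ring
    rw [this]
    simpa using h81
  have hev1 : ∀ᶠ t in atTop, ‖d t‖ < ε/4 := hTd.eventually_lt_const (by linarith)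
  have hev2 : ∀ᶠ t in atTop, ‖u‖/2^t < ε/4 := h8.eventually_lt_const (by linarith)
  obtain ⟨t, ht1, ht2⟩ := (hev1.and hev2).exists
  have := hmass t
  linarith

end CoreU

section Mono

set_option linter.unusedSectionVars false
set_option maxHeartbeats 1000000

variable {E : Type*} [NormedAddCommGroup E] [Lattice E] [HasSolidNorm E] [IsOrderedAddMonoid E] [NormedSpace ℝ E] [CompleteSpace E]

lemma geom_aux (c : ℝ) (hc : 0 ≤ c) (N : ℕ) :
    ∑ l ∈ Finset.range N, c / 2^l ≤ 2 * c := by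
  have he : ∀ l : ℕ, c / 2^l = c * (1/2)^l := by
    intro l
    rw [div_pow, one_pow, mul_one_div]
  calc ∑ l ∈ Finset.range N, c / 2^l = c * ∑ l ∈ Finset.range N, ((1:ℝ)/2)^l := by
        rw [Finset.mul_sum]; exact Finset.sum_congr rfl (fun l _ => he l)
    _ ≤ c * 2 := mul_le_mul_of_nonneg_left (sum_geometric_two_le N) hc
    _ = 2 * c := by ring

lemma mono_limit {u : E} (hu : 0 ≤ u) (hdn : DisjNullOn u)
    (w : ℕ → E) (hw0 : ∀ n, 0 ≤ w n) (hwu : ∀ n, w n ≤ u) (hmono : Monotone w) :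
    ∃ l : E, Tendsto w atTop (𝓝 l) := by
  have hc : CauchySeq w := by
    by_contra hnc
    rw [Metric.cauchySeq_iff] at hnc
    push_neg at hnc
    obtain ⟨ε, hε, hN⟩ := hnc
    have H : ∀ N : ℕ, ∃ p : ℕ × ℕ, N ≤ p.1 ∧ p.1 < p.2 ∧ ε ≤ ‖w p.2 - w p.1‖ := by
      intro N
      obtain ⟨m, hm, n, hn, hd⟩ := hN N
      rcases lt_trichotomy m n with h | h | h
      · refine ⟨(m, n), hm, h, ?_⟩
        rw [dist_eq_norm, norm_sub_rev] at hd
        exact hd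
      · exfalso; rw [h] at hd; simp at hd; linarith
      · refine ⟨(n, m), hn, h, ?_⟩
        rw [dist_eq_norm] at hd
        exact hd
    choose Pp hP1 hP2 hP3 using H
    set A : ℕ → ℕ × ℕ := fun k => Nat.rec (Pp 0) (fun _ prev => Pp prev.2) k with hA
    have hA0 : A 0 = Pp 0 := rfl
    have hAs : ∀ k, A (k+1) = Pp ((A k).2) := fun k => rfl
    have hrep : ∀ k, ∃ N, A k = Pp N := by
      intro k
      cases k with
      | zero => exact ⟨0, rfl⟩
      | succ k => exact ⟨(A k).2, rfl⟩
    have hlt : ∀ k, (A k).1 < (A k).2 := by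
      intro k; obtain ⟨N, hNe⟩ := hrep k; rw [hNe]; exact hP2 N
    have hbig : ∀ k, ε ≤ ‖w (A k).2 - w (A k).1‖ := by
      intro k; obtain ⟨N, hNe⟩ := hrep k; rw [hNe]; exact hP3 N
    have hnext : ∀ k, (A k).2 ≤ (A (k+1)).1 := by
      intro k; rw [hAs k]; exact hP1 _
    set y : ℕ → E := fun k => w (A k).2 - w (A k).1 with hy
    have hy0 : ∀ k, 0 ≤ y k := fun k => sub_nonneg.2 (hmono (hlt k).le)
    have hinv : ∀ T : ℕ, ∑ k ∈ Finset.range T, y k ≤ w (A T).1 := by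
      intro T
      induction T with
      | zero => simpa using hw0 _
      | succ T ih =>
          rw [Finset.sum_range_succ]
          have h1 : ∑ k ∈ Finset.range T, y k + y T ≤ w (A T).1 + y T :=
            add_le_add_left ih _
          have h2 : w (A T).1 + y T = w (A T).2 := by simp only [hy]; abel
          calc ∑ k ∈ Finset.range T, y k + y T ≤ w (A T).2 := by rw [← h2]; exact h1
            _ ≤ w (A (T+1)).1 := hmono (hnext T)
    have hsum : ∀ F : Finset ℕ, ∑ j ∈ F, y j ≤ u := by
      intro F
      set T := (F.sup id) + 1 with hT
      have hFsub : F ⊆ Finset.range T := by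
        intro j hj
        rw [Finset.mem_range, hT]
        have : j ≤ F.sup id := Finset.le_sup (f := id) hj
        omega
      calc ∑ j ∈ F, y j ≤ ∑ j ∈ Finset.range T, y j :=
            Finset.sum_le_sum_of_subset_of_nonneg hFsub (fun j _ _ => hy0 j)
        _ ≤ w (A T).1 := hinv T
        _ ≤ u := hwu _
    exact core_sum_bounded hu hdn y hy0 hsum hε (fun k => by
      have := hbig k; simp only [hy]; exact this)
  exact cauchySeq_tendsto_of_complete hc

/-- continuity of the modulus value along norm limits -/
lemma av_lim (f : E →L[ℝ] ℝ) {v : ℕ → E} {L : E} (hv0 : ∀ n, 0 ≤ v n) (hL : 0 ≤ L)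
    (hT : Tendsto v atTop (𝓝 L)) :
    Tendsto (fun n => absVal f (v n)) atTop (𝓝 (absVal f L)) := by
  have hdiff : ∀ n, ‖absVal f (v n) - absVal f L‖ ≤ ‖f‖ * ‖v n - L‖ := by
    intro n
    have h1 : absVal f (v n) ≤ absVal f L + ‖f‖ * ‖v n - L‖ := av_lipschitz f (hv0 n) hL
    have h2 : absVal f L ≤ absVal f (v n) + ‖f‖ * ‖L - v n‖ := av_lipschitz f hL (hv0 n)
    rw [norm_sub_rev] at h2
    rw [Real.norm_eq_abs, abs_le]
    constructor <;> linarith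
  have hn0 : Tendsto (fun n => ‖f‖ * ‖v n - L‖) atTop (𝓝 0) := by
    have := (tendsto_iff_norm_sub_tendsto_zero.1 hT).const_mul ‖f‖
    simpa using this
  have := squeeze_zero_norm hdiff hn0
  have h3 := this.add_const (absVal f L)
  simpa using h3

lemma exists_subseq_of_not_tendsto {a : ℕ → ℝ} (h0 : ∀ n, 0 ≤ a n)
    (h : ¬ Tendsto a atTop (𝓝 0)) :
    ∃ δ > 0, ∃ φ : ℕ → ℕ, StrictMono φ ∧ ∀ k, δ ≤ a (φ k) := by
  rw [Metric.tendsto_atTop] at h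
  push_neg at h
  obtain ⟨δ, hδ, hfreq⟩ := h
  have hfr : ∃ᶠ n in atTop, δ ≤ a n := by
    rw [Filter.frequently_atTop]
    intro N
    obtain ⟨n, hn1, hn2⟩ := hfreq N
    refine ⟨n, hn1, ?_⟩
    rw [Real.dist_eq, sub_zero, abs_of_nonneg (h0 n)] at hn2
    exact hn2
  obtain ⟨φ, hφ1, hφ2⟩ := Filter.extraction_of_frequently_atTop hfr
  exact ⟨δ, hδ, φ, hφ1, hφ2⟩

end Mono

section AvNull

set_option linter.unusedSectionVars false
set_option maxHeartbeats 1600000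

variable {E : Type*} [NormedAddCommGroup E] [Lattice E] [HasSolidNorm E] [IsOrderedAddMonoid E] [NormedSpace ℝ E] [CompleteSpace E]

lemma lat_inf_lb {a b u : E} (hau : a ≤ u) (hbu : b ≤ u) : a + b - u ≤ a ⊓ b := by
  have h1 : a ⊓ b + a ⊔ b = a + b := inf_add_sup a b
  have h2 : a ⊔ b ≤ u := sup_le hau hbu
  have h3 : a ⊓ b = a + b - a ⊔ b := by rw [eq_sub_iff_add_eq, h1]
  rw [h3]
  exact sub_le_sub_left h2 (a + b)

lemma av_null {u : E} (hu : 0 ≤ u) (hdn : DisjNullOn u)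
    (f : ℕ → E →L[ℝ] ℝ) (hdisj : Pairwise (fun m n => FunDisjoint (f m) (f n)))
    {M : ℝ} (hM : 1 ≤ M) (hfM : ∀ n, ‖f n‖ ≤ M) :
    Tendsto (fun n => absVal (f n) u) atTop (𝓝 0) := by
  by_contra hcon
  obtain ⟨δ, hδ, φ, hφmono, hφ⟩ := exists_subseq_of_not_tendsto
    (fun n => av_nonneg (f n) hu) hcon
  set h : ℕ → E →L[ℝ] ℝ := fun k => f (φ k) with hh
  have hdisj' : ∀ {m n : ℕ}, m ≠ n → FunDisjoint (h m) (h n) :=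
    fun {m n} hmn => hdisj (fun e => hmn (hφmono.injective e))
  have hbig : ∀ k, δ ≤ absVal (h k) u := hφ
  have hMk : ∀ k, ‖h k‖ ≤ M := fun k => hfM _
  classical
  -- pair splittings
  have hsplit : ∀ k l : ℕ, k < l → ∃ y : E, 0 ≤ y ∧ y ≤ u ∧
      absVal (h k) y + absVal (h l) (u - y) < δ / 2^(k+l+6) := by
    intro k l hkl
    exact fd_split (hdisj' hkl.ne) hu (by positivity)
  choose! S hS0 hSu hSsmall using hsplit
  set P : ℕ → ℕ → E := fun k l =>
    if l < k then S l k else if k < l then u - S k l else u with hP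
  have hP0 : ∀ k l, 0 ≤ P k l := by
    intro k l
    rw [hP]; dsimp only
    split_ifs with h1 h2
    · exact hS0 l k h1
    · exact sub_nonneg.2 (hSu k l h2)
    · exact hu
  have hPu : ∀ k l, P k l ≤ u := by
    intro k l
    rw [hP]; dsimp only
    split_ifs with h1 h2
    · exact hSu l k h1
    · exact sub_le_self _ (hS0 k l h2)
    · exact le_refl u
  have hPa : ∀ k l, absVal (h k) (u - P k l) ≤ δ / 2^(k+l+6) := by
    intro k l
    rw [hP]; dsimp only
    split_ifs with h1 h2
    · have := hSsmall l k h1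
      have h3 : absVal (h k) (u - S l k) ≤ _ := le_add_of_nonneg_left
        (av_nonneg (h l) (hS0 l k h1))
      have h4 : absVal (h k) (u - S l k) < δ / 2^(l+k+6) := lt_of_le_of_lt h3 this
      rw [add_comm l k] at h4
      exact h4.le
    · have := hSsmall k l h2
      have h3 : absVal (h k) (S k l) < δ / 2^(k+l+6) := by
        have h4 : absVal (h k) (S k l) ≤ _ := le_add_of_nonneg_right
          (av_nonneg (h l) (sub_nonneg.2 (hSu k l h2)))
        exact lt_of_le_of_lt h4 this
      have h5 : u - (u - S k l) = S k l := by abel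
      rw [h5]
      exact h3.le
    · have h5 : u - u = (0:E) := by abel
      rw [h5, av_zero]
      positivity
  have hPb : ∀ k l, k ≠ l → absVal (h l) (P k l) ≤ δ / 2^(k+l+6) := by
    intro k l hkl
    rw [hP]; dsimp only
    split_ifs with h1 h2
    · have := hSsmall l k h1
      have h3 : absVal (h l) (S l k) ≤ _ := le_add_of_nonneg_right
        (av_nonneg (h k) (sub_nonneg.2 (hSu l k h1)))
      have h4 : absVal (h l) (S l k) < δ / 2^(l+k+6) := lt_of_le_of_lt h3 this
      rw [add_comm l k] at h4
      exact h4.le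
    · have := hSsmall k l h2
      have h3 : absVal (h l) (u - S k l) ≤ _ := le_add_of_nonneg_left
        (av_nonneg (h k) (hS0 k l h2))
      exact (lt_of_le_of_lt h3 this).le
    · omega
  -- nested infima
  set I : ℕ → ℕ → E := fun k N => Nat.rec u (fun N prev => prev ⊓ P k N) N with hI
  have hI0eq : ∀ k, I k 0 = u := fun k => rfl
  have hIs : ∀ k N, I k (N+1) = I k N ⊓ P k N := fun k N => rfl
  have hIu : ∀ k N, I k N ≤ u := by
    intro k N
    induction N with
    | zero => exact le_refl u
    | succ N ih => rw [hIs]; exact le_trans inf_le_left ih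
  have hI0 : ∀ k N, 0 ≤ I k N := by
    intro k N
    induction N with
    | zero => exact hu
    | succ N ih => rw [hIs]; exact le_inf ih (hP0 k N)
  have hIanti : ∀ k, Antitone (fun N => I k N) := by
    intro k
    refine antitone_nat_of_succ_le ?_
    intro N
    rw [hIs]; exact inf_le_left
  have hIP : ∀ k l, I k (l+1) ≤ P k l := fun k l => by rw [hIs]; exact inf_le_right
  have hIsum : ∀ k N, u - I k N ≤ ∑ l ∈ Finset.range N, (u - P k l) := by
    intro k N
    induction N with
    | zero => simp [hI0eq]
    | succ N ih =>
        rw [Finset.sum_range_succ, hIs]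
        have h1 : I k N + P k N - u ≤ I k N ⊓ P k N := lat_inf_lb (hIu k N) (hPu k N)
        have h2 : u - I k N ⊓ P k N ≤ (u - I k N) + (u - P k N) := by
          have := sub_le_sub_left h1 (u + u)
          calc u - I k N ⊓ P k N ≤ u - (I k N + P k N - u) := sub_le_sub_left h1 u
            _ = (u - I k N) + (u - P k N) := by abel
        calc u - I k N ⊓ P k N ≤ (u - I k N) + (u - P k N) := h2
          _ ≤ (∑ l ∈ Finset.range N, (u - P k l)) + (u - P k N) := add_le_add_left ih _
  have havIu : ∀ k N, absVal (h k) (u - I k N) ≤ δ / 32 := by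
    intro k N
    have h1 : absVal (h k) (u - I k N) ≤ ∑ l ∈ Finset.range N, absVal (h k) (u - P k l) := by
      calc absVal (h k) (u - I k N)
          ≤ absVal (h k) (∑ l ∈ Finset.range N, (u - P k l)) :=
            av_mono _ (sub_nonneg.2 (hIu k N)) (hIsum k N)
        _ ≤ ∑ l ∈ Finset.range N, absVal (h k) (u - P k l) :=
            sum_av_le _ _ (fun l => sub_nonneg.2 (hPu k l)) _
    have h2 : ∑ l ∈ Finset.range N, absVal (h k) (u - P k l)
        ≤ ∑ l ∈ Finset.range N, δ / 2^(k+l+6) :=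
      Finset.sum_le_sum (fun l _ => hPa k l)
    have h3 : ∑ l ∈ Finset.range N, δ / 2^(k+l+6) ≤ 2 * (δ / 2^(k+6)) := by
      have he : ∀ l : ℕ, δ / 2^(k+l+6) = (δ / 2^(k+6)) / 2^l := by
        intro l
        rw [div_div, ← pow_add]
        congr 2
        omega
      calc ∑ l ∈ Finset.range N, δ / 2^(k+l+6)
          = ∑ l ∈ Finset.range N, (δ / 2^(k+6)) / 2^l :=
            Finset.sum_congr rfl (fun l _ => he l)
        _ ≤ 2 * (δ / 2^(k+6)) := geom_aux _ (by positivity) N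
    have h4 : 2 * (δ / 2^(k+6)) ≤ δ / 32 := by
      have h5 : δ / 2^(k+6) ≤ δ / 64 := by
        apply div_le_div_of_nonneg_left hδ.le (by norm_num)
        calc (64:ℝ) = 2^6 := by norm_num
          _ ≤ 2^(k+6) := pow_le_pow_right₀ one_le_two (by omega)
      linarith
    linarith
  -- limits of the nested infima
  have hIc : ∀ k, ∃ ck : E, Tendsto (fun N => I k N) atTop (𝓝 ck) := by
    intro k
    obtain ⟨L, hL⟩ := mono_limit hu hdn (fun N => u - I k N)
      (fun N => sub_nonneg.2 (hIu k N))
      (fun N => sub_le_self _ (hI0 k N))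
      (fun a b hab => sub_le_sub_left (hIanti k hab) u)
    refine ⟨u - L, ?_⟩
    have h1 := hL.const_sub u
    have h2 : (fun N => u - (u - I k N)) = fun N => I k N := by
      funext N; abel
    rw [h2] at h1
    exact h1
  choose c hc using hIc
  have hcleI : ∀ k N, c k ≤ I k N := by
    intro k N
    refine le_of_tendsto (hc k) ?_
    exact Filter.eventually_atTop.2 ⟨N, fun M' hM' => hIanti k hM'⟩
  have hc0 : ∀ k, 0 ≤ c k := by
    intro k
    refine ge_of_tendsto (hc k) (Filter.Eventually.of_forall (fun N => hI0 k N))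
  have hcu : ∀ k, c k ≤ u := fun k => le_trans (hcleI k 0) (le_of_eq (hI0eq k))
  have hcP : ∀ k l, c k ≤ P k l := fun k l => le_trans (hcleI k (l+1)) (hIP k l)
  have havc : ∀ k, δ - δ/32 ≤ absVal (h k) (c k) := by
    intro k
    have hNbound : ∀ N, δ - δ/32 ≤ absVal (h k) (I k N) := by
      intro N
      have h1 : absVal (h k) u ≤ absVal (h k) (I k N) + absVal (h k) (u - I k N) := by
        have heq : u = I k N + (u - I k N) := by abel
        calc absVal (h k) u = absVal (h k) (I k N + (u - I k N)) := by rw [← heq]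
          _ ≤ _ := av_subadd _ (hI0 k N) (sub_nonneg.2 (hIu k N))
      have h2 := havIu k N
      have h3 := hbig k
      linarith
    have hT := av_lim (h k) (fun N => hI0 k N) (hc0 k) (hc k)
    exact ge_of_tendsto hT (Filter.Eventually.of_forall hNbound)
  have hcross : ∀ k l, k ≠ l → absVal (h k) (c l) ≤ δ / 2^(k+l+6) := by
    intro k l hkl
    have h1 : absVal (h k) (c l) ≤ absVal (h k) (P l k) :=
      av_mono _ (hc0 l) (hcP l k)
    have h2 := hPb l k (fun e => hkl e.symm)
    rw [add_comm l k] at h2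
    exact le_trans h1 h2
  -- the disjoint sequence
  set Sm : ℕ → ℕ → E := fun k N => ∑ l ∈ Finset.range N, (if l = k then 0 else c l) with hSm
  have hSm0 : ∀ k N, 0 ≤ Sm k N := by
    intro k N
    refine Finset.sum_nonneg (fun l _ => ?_)
    split_ifs
    · exact le_refl 0
    · exact hc0 l
  have hSmmono : ∀ k, Monotone (fun N => Sm k N) := by
    intro k
    refine monotone_nat_of_le_succ (fun N => ?_)
    rw [hSm]; dsimp only
    rw [Finset.sum_range_succ]
    refine le_add_of_nonneg_right ?_
    split_ifs
    · exact le_refl 0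
    · exact hc0 N
  set Z : ℕ → ℕ → E := fun k N => (c k - Sm k N) ⊔ 0 with hZ
  have hZ0 : ∀ k N, 0 ≤ Z k N := fun k N => le_sup_right
  have hZck : ∀ k N, Z k N ≤ c k := by
    intro k N
    refine sup_le (sub_le_self _ (hSm0 k N)) (hc0 k)
  have hZu : ∀ k N, Z k N ≤ u := fun k N => le_trans (hZck k N) (hcu k)
  have hZanti : ∀ k, Antitone (fun N => Z k N) := by
    intro k
    intro a b hab
    exact sup_le_sup_right (sub_le_sub_left (hSmmono k hab) _) 0
  have hZlim : ∀ k, ∃ zk : E, Tendsto (fun N => Z k N) atTop (𝓝 zk) := by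
    intro k
    obtain ⟨L, hL⟩ := mono_limit hu hdn (fun N => u - Z k N)
      (fun N => sub_nonneg.2 (hZu k N))
      (fun N => sub_le_self _ (hZ0 k N))
      (fun a b hab => sub_le_sub_left (hZanti k hab) u)
    refine ⟨u - L, ?_⟩
    have h1 := hL.const_sub u
    have h2 : (fun N => u - (u - Z k N)) = fun N => Z k N := by
      funext N; abel
    rw [h2] at h1
    exact h1
  choose z hz using hZlim
  have hz0 : ∀ k, 0 ≤ z k :=
    fun k => ge_of_tendsto (hz k) (Filter.Eventually.of_forall (fun N => hZ0 k N))
  have hzu : ∀ k, z k ≤ u :=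
    fun k => le_of_tendsto (hz k) (Filter.Eventually.of_forall (fun N => hZu k N))
  have hzleZ : ∀ k N, z k ≤ Z k N := by
    intro k N
    refine le_of_tendsto (hz k) ?_
    exact Filter.eventually_atTop.2 ⟨N, fun M' hM' => hZanti k hM'⟩
  have hzdisj : Pairwise (fun k l => z k ⊓ z l = 0) := by
    have key : ∀ k l, k ≠ l → z k ≤ (c k - c l) ⊔ 0 := by
      intro k l hkl
      have h1 : z k ≤ Z k (l+1) := hzleZ k (l+1)
      have h2 : c l ≤ Sm k (l+1) := by
        rw [hSm]; dsimp only
        have hmem : l ∈ Finset.range (l+1) := Finset.mem_range.2 (by omega)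
        have := Finset.single_le_sum (f := fun i => if i = k then (0:E) else c i)
          (fun i _ => by split_ifs; exacts [le_refl 0, hc0 i]) hmem
        have hlk : l ≠ k := fun e => hkl e.symm
        simpa [if_neg hlk] using this
      calc z k ≤ (c k - Sm k (l+1)) ⊔ 0 := h1
        _ ≤ (c k - c l) ⊔ 0 := sup_le_sup_right (sub_le_sub_left h2 _) 0
    intro k l hkl
    have h1 : z k ⊓ z l ≤ ((c k - c l) ⊔ 0) ⊓ ((c l - c k) ⊔ 0) :=
      inf_le_inf (key k l hkl) (key l k (fun e => hkl e.symm))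
    have h2 : ((c k - c l) ⊔ 0) ⊓ ((c l - c k) ⊔ 0) = 0 := by
      have := lat_posneg (c k - c l)
      rw [neg_sub] at this
      exact this
    refine le_antisymm ?_ (le_inf (hz0 k) (hz0 l))
    rw [← h2]
    exact h1
  have havSm : ∀ k N, absVal (h k) (Sm k N) ≤ δ / 32 := by
    intro k N
    have h1 : absVal (h k) (Sm k N) ≤
        ∑ l ∈ Finset.range N, absVal (h k) (if l = k then (0:E) else c l) :=
      sum_av_le _ _ (fun l => by split_ifs; exacts [le_refl 0, hc0 l]) _
    have h2 : ∑ l ∈ Finset.range N, absVal (h k) (if l = k then (0:E) else c l)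
        ≤ ∑ l ∈ Finset.range N, δ / 2^(k+l+6) := by
      refine Finset.sum_le_sum (fun l _ => ?_)
      split_ifs with he
      · rw [av_zero]; positivity
      · exact hcross k l (fun e => he e.symm)
    have h3 : ∑ l ∈ Finset.range N, δ / 2^(k+l+6) ≤ 2 * (δ / 2^(k+6)) := by
      have he : ∀ l : ℕ, δ / 2^(k+l+6) = (δ / 2^(k+6)) / 2^l := by
        intro l
        rw [div_div, ← pow_add]
        congr 2
        omega
      calc ∑ l ∈ Finset.range N, δ / 2^(k+l+6)
          = ∑ l ∈ Finset.range N, (δ / 2^(k+6)) / 2^l :=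
            Finset.sum_congr rfl (fun l _ => he l)
        _ ≤ 2 * (δ / 2^(k+6)) := geom_aux _ (by positivity) N
    have h4 : 2 * (δ / 2^(k+6)) ≤ δ / 32 := by
      have h5 : δ / 2^(k+6) ≤ δ / 64 := by
        apply div_le_div_of_nonneg_left hδ.le (by norm_num)
        calc (64:ℝ) = 2^6 := by norm_num
          _ ≤ 2^(k+6) := pow_le_pow_right₀ one_le_two (by omega)
      linarith
    linarith
  have havz : ∀ k, δ/2 ≤ absVal (h k) (z k) := by
    intro k
    have hNbound : ∀ N, δ/2 ≤ absVal (h k) (Z k N) := by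
      intro N
      have hle : c k ≤ Z k N + Sm k N := by
        have h1 : c k - Sm k N ≤ Z k N := le_sup_left
        have := add_le_add_left h1 (Sm k N)
        simpa using this
      have h2 : absVal (h k) (c k) ≤ absVal (h k) (Z k N) + absVal (h k) (Sm k N) :=
        calc absVal (h k) (c k) ≤ absVal (h k) (Z k N + Sm k N) :=
              av_mono _ (hc0 k) hle
          _ ≤ _ := av_subadd _ (hZ0 k N) (hSm0 k N)
      have h3 := havSm k N
      have h4 := havc k
      linarith
    have hT := av_lim (h k) (fun N => hZ0 k N) (hz0 k) (hz k)
    exact ge_of_tendsto hT (Filter.Eventually.of_forall hNbound)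
  have hznorm : ∀ k, δ/(2*M) ≤ ‖z k‖ := by
    intro k
    have h1 : absVal (h k) (z k) ≤ M * ‖z k‖ := by
      calc absVal (h k) (z k) ≤ ‖h k‖ * ‖z k‖ := av_le_opNorm _ (hz0 k)
        _ ≤ M * ‖z k‖ := mul_le_mul_of_nonneg_right (hMk k) (norm_nonneg _)
    have h2 := havz k
    have hM0 : (0:ℝ) < M := lt_of_lt_of_le one_pos hM
    rw [div_le_iff₀ (by positivity)]
    nlinarith
  have hTz := hdn z hz0 hzu hzdisj
  have hev : ∀ᶠ k in atTop, ‖z k‖ < δ/(2*M) := by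
    refine hTz.eventually_lt_const ?_
    positivity
  obtain ⟨k, hk⟩ := hev.exists
  have := hznorm k
  linarith

end AvNull

section LemmaT

set_option linter.unusedSectionVars false
set_option maxHeartbeats 1600000

variable {E : Type*} [NormedAddCommGroup E] [Lattice E] [HasSolidNorm E] [IsOrderedAddMonoid E] [NormedSpace ℝ E] [CompleteSpace E]

lemma disjNullOn_abs_of_mem {A : Set E} (hA : LWeaklyCompact A) {a : E} (ha : a ∈ A) :
    DisjNullOn |a| := by
  intro z hz0 hzu hdisj
  refine hA.2 z (fun n => ⟨a, ha, ?_⟩) (fun m n hmn => ?_)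
  · rw [abs_of_nonneg (hz0 n)]; exact hzu n
  · show |z m| ⊓ |z n| = 0
    rw [abs_of_nonneg (hz0 m), abs_of_nonneg (hz0 n)]
    exact hdisj hmn

lemma lemmaT {A : Set E} (hA : LWeaklyCompact A) {ε' : ℝ} (hε' : 0 < ε') :
    ∃ u : E, 0 ≤ u ∧ DisjNullOn u ∧
      ∀ a ∈ A, ∃ b r : E, a = b + r ∧ |b| ≤ u ∧ ‖r‖ ≤ ε' := by
  classical
  rcases Set.eq_empty_or_nonempty A with hAe | ⟨a₀, ha₀⟩
  · refine ⟨0, le_refl 0, disjNullOn_zero, ?_⟩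
    intro a ha
    rw [hAe] at ha
    exact absurd ha (Set.notMem_empty a)
  obtain ⟨C, hC⟩ := (isBounded_iff_forall_norm_le).1 hA.1
  have hC0 : 0 ≤ C := le_trans (norm_nonneg a₀) (hC a₀ ha₀)
  by_contra hne
  push_neg at hne
  have hcon : ∀ u : E, 0 ≤ u → DisjNullOn u → ∃ a ∈ A, ε' < ‖(|a| - u) ⊔ 0‖ := by
    intro u hu hdnu
    obtain ⟨a, haA, hall⟩ := hne u hu hdnu
    have habs : |a| ≤ u + (|a| - u) ⊔ 0 := by
      rw [← sub_le_iff_le_add']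
      exact le_sup_left
    obtain ⟨b, r, hbr, hb, hr⟩ := riesz_decomp hu le_sup_right habs
    refine ⟨a, haA, ?_⟩
    have h1 := hall b r hbr hb
    have h2 : ‖r‖ ≤ ‖(|a| - u) ⊔ 0‖ := by
      refine HasSolidNorm.solid ?_
      rwa [abs_of_nonneg (le_sup_right : (0:E) ≤ (|a| - u) ⊔ 0)]
    linarith
  -- the witness function and the recursively defined sequence
  set wit : E → E := fun v =>
    if hv : ∃ a ∈ A, ε' < ‖(|a| - v) ⊔ 0‖ then hv.choose else a₀ with hwit
  have hwitspec : ∀ v : E, 0 ≤ v → DisjNullOn v →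
      wit v ∈ A ∧ ε' < ‖(|wit v| - v) ⊔ 0‖ := by
    intro v hv hdnv
    have hv' : ∃ a ∈ A, ε' < ‖(|a| - v) ⊔ 0‖ := hcon v hv hdnv
    rw [hwit]; dsimp only
    rw [dif_pos hv']
    obtain ⟨h1, h2⟩ := hv'.choose_spec
    exact ⟨h1, h2⟩
  set p : ℕ → E × E := fun k =>
    Nat.rec (a₀, |a₀|) (fun k prev =>
      (wit ((4^(k+1) : ℕ) • prev.2), prev.2 + |wit ((4^(k+1) : ℕ) • prev.2)|)) k with hp
  set x : ℕ → E := fun k => (p k).1 with hx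
  set σ : ℕ → E := fun k => (p k).2 with hσ
  have hx0 : x 0 = a₀ := rfl
  have hσ0 : σ 0 = |a₀| := rfl
  have hxs : ∀ k, x (k+1) = wit ((4^(k+1) : ℕ) • σ k) := fun k => rfl
  have hσs : ∀ k, σ (k+1) = σ k + |x (k+1)| := fun k => rfl
  have hmain : ∀ k, x k ∈ A ∧ 0 ≤ σ k ∧ DisjNullOn (σ k) := by
    intro k
    induction k with
    | zero =>
        exact ⟨ha₀, abs_nonneg a₀, by rw [hσ0]; exact disjNullOn_abs_of_mem hA ha₀⟩
    | succ k ih =>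
        obtain ⟨_, hσ0', hσdn⟩ := ih
        have hu0 : (0:E) ≤ (4^(k+1) : ℕ) • σ k := nsmul_nonneg hσ0' _
        have hudn : DisjNullOn ((4^(k+1) : ℕ) • σ k) := disjNullOn_nsmul hσ0' hσdn _
        obtain ⟨hwA, _⟩ := hwitspec _ hu0 hudn
        have hxA : x (k+1) ∈ A := by rw [hxs]; exact hwA
        refine ⟨hxA, ?_, ?_⟩
        · rw [hσs]; exact add_nonneg hσ0' (abs_nonneg _)
        · rw [hσs]
          exact disjNullOn_add hσ0' (abs_nonneg _) hσdn (disjNullOn_abs_of_mem hA hxA)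
  have hbk : ∀ k, ε' < ‖(|x (k+1)| - (4^(k+1) : ℕ) • σ k) ⊔ 0‖ := by
    intro k
    obtain ⟨_, hσ0', hσdn⟩ := hmain k
    have hu0 : (0:E) ≤ (4^(k+1) : ℕ) • σ k := nsmul_nonneg hσ0' _
    have hudn : DisjNullOn ((4^(k+1) : ℕ) • σ k) := disjNullOn_nsmul hσ0' hσdn _
    obtain ⟨_, h2⟩ := hwitspec _ hu0 hudn
    rw [hxs]
    exact h2
  have hσsum : ∀ k, σ k = ∑ i ∈ Finset.range (k+1), |x i| := by
    intro k
    induction k with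
    | zero => simp [hσ0, hx0]
    | succ k ih =>
        rw [hσs, ih]
        conv_rhs => rw [Finset.sum_range_succ]
  have hσge : ∀ k i, i ≤ k → |x i| ≤ σ k := by
    intro k i hik
    rw [hσsum]
    exact Finset.single_le_sum (f := fun i => |x i|)
      (fun i _ => abs_nonneg _) (Finset.mem_range.2 (by omega))
  -- the almost disjoint sequence
  set b : ℕ → E := fun k => (|x (k+1)| - (4^(k+1) : ℕ) • σ k) ⊔ 0 with hb
  have hb0 : ∀ k, 0 ≤ b k := fun k => le_sup_right
  have hbx : ∀ k, b k ≤ |x (k+1)| := by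
    intro k
    refine sup_le (sub_le_self _ (nsmul_nonneg (hmain k).2.1 _)) (abs_nonneg _)
  have hbnorm : ∀ k, ε' < ‖b k‖ := hbk
  have hxC : ∀ k, ‖x k‖ ≤ C := fun k => hC _ (hmain k).1
  -- overlap bound
  have hoverlap : ∀ m k, m < k → ‖b m ⊓ b k‖ ≤ C / 2^(m+k) := by
    intro m k hmk
    have h1 : b k ≤ (|x (k+1)| - (4^(k+1) : ℕ) • |x (m+1)|) ⊔ 0 := by
      refine sup_le_sup_right (sub_le_sub_left ?_ _) 0
      exact nsmul_le_nsmul_right (hσge k (m+1) (by omega)) _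
    have h2 : b m ⊓ b k ≤
        |x (m+1)| ⊓ ((|x (k+1)| - (4^(k+1) : ℕ) • |x (m+1)|) ⊔ 0) :=
      inf_le_inf (hbx m) h1
    have h3 := lat_overlap (4^(k+1)) (abs_nonneg (x (m+1))) (abs_nonneg (x (k+1)))
    have h4 : (4^(k+1) : ℕ) • (b m ⊓ b k) ≤ |x (k+1)| := by
      refine le_trans (nsmul_le_nsmul_right h2 _) h3
    have h5 : b m ⊓ b k ≤ (((4^(k+1) : ℕ) : ℝ)⁻¹) • |x (k+1)| :=
      lat_le_inv_smul (by positivity) h4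
    have h6 : 0 ≤ b m ⊓ b k := le_inf (hb0 m) (hb0 k)
    have h7 : ‖b m ⊓ b k‖ ≤ ‖(((4^(k+1) : ℕ) : ℝ)⁻¹) • |x (k+1)|‖ :=
      norm_mono_of_le h6 h5
    have h8 : ‖(((4^(k+1) : ℕ) : ℝ)⁻¹) • |x (k+1)|‖ = (((4^(k+1) : ℕ) : ℝ)⁻¹) * ‖x (k+1)‖ := by
      rw [norm_smul, norm_abs_eq_norm]
      congr 1
      rw [Real.norm_eq_abs, abs_of_nonneg (by positivity)]
    have h9 : (((4^(k+1) : ℕ) : ℝ)⁻¹) * ‖x (k+1)‖ ≤ C / 2^(m+k) := by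
      have h10 : ((2:ℝ))^(m+k) ≤ ((4^(k+1) : ℕ) : ℝ) := by
        push_cast
        calc ((2:ℝ))^(m+k) ≤ 2^(2*(k+1)) := pow_le_pow_right₀ one_le_two (by omega)
          _ = 4^(k+1) := by rw [pow_mul]; norm_num
      rw [div_eq_mul_inv, mul_comm C]
      have h11 : (((4^(k+1) : ℕ) : ℝ)⁻¹) ≤ ((2:ℝ)^(m+k))⁻¹ := by
        apply inv_anti₀ (by positivity) h10
      exact mul_le_mul h11 (le_trans (hxC (k+1)) (le_refl C)) (norm_nonneg _)
        (by positivity)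
    calc ‖b m ⊓ b k‖ ≤ _ := h7
      _ = _ := h8
      _ ≤ _ := h9
  have hoverlap' : ∀ m k, m ≠ k → ‖b m ⊓ b k‖ ≤ C / 2^(m+k) := by
    intro m k hmk
    rcases lt_or_gt_of_ne hmk with h | h
    · exact hoverlap m k h
    · rw [inf_comm]
      have := hoverlap k m h
      rwa [add_comm k m] at this
  -- the series of overlaps
  have hgsum : ∀ k : ℕ, Summable (fun m : ℕ => C / 2^(m+k)) := by
    intro k
    have he : (fun m : ℕ => C / 2^(m+k)) = fun m => (C / 2^k) * (1/2)^m := by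
      funext m
      rw [add_comm m k, pow_add, div_pow, one_pow, mul_one_div, div_div]
    rw [he]
    exact summable_geometric_two.mul_left _
  have hbound : ∀ k m : ℕ, ‖if m = k then (0:E) else b m ⊓ b k‖ ≤ C / 2^(m+k) := by
    intro k m
    split_ifs with hm
    · simp only [norm_zero]; positivity
    · exact hoverlap' m k hm
  have hsummable : ∀ k, Summable (fun m => if m = k then (0:E) else b m ⊓ b k) :=
    fun k => Summable.of_norm_bounded (hgsum k) (hbound k)
  set cc : ℕ → E := fun k => ∑' m, (if m = k then (0:E) else b m ⊓ b k) with hcc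
  have hcc0 : ∀ k, 0 ≤ cc k := by
    intro k
    refine tsum_nonneg (fun m => ?_)
    split_ifs
    · exact le_refl 0
    · exact le_inf (hb0 m) (hb0 k)
  have hccge : ∀ m k, m ≠ k → b m ⊓ b k ≤ cc k := by
    intro m k hmk
    have := Summable.le_tsum (hsummable k) m (fun j _ => by
      split_ifs
      · exact le_refl 0
      · exact le_inf (hb0 j) (hb0 k))
    rwa [if_neg hmk] at this
  have hccnorm : ∀ k, ‖cc k‖ ≤ 2 * C / 2^k := by
    intro k
    have hns : Summable (fun m => ‖if m = k then (0:E) else b m ⊓ b k‖) :=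
      Summable.of_nonneg_of_le (fun m => norm_nonneg _) (hbound k) (hgsum k)
    have h1 : ‖cc k‖ ≤ ∑' m, ‖if m = k then (0:E) else b m ⊓ b k‖ :=
      norm_tsum_le_tsum_norm hns
    have h2 : ∑' m, ‖if m = k then (0:E) else b m ⊓ b k‖ ≤ ∑' m : ℕ, C / 2^(m+k) :=
      Summable.tsum_le_tsum (hbound k) hns (hgsum k)
    have h3 : ∑' m : ℕ, C / 2^(m+k) = (C / 2^k) * 2 := by
      have he : (fun m : ℕ => C / 2^(m+k)) = fun m => (C / 2^k) * (1/2)^m := by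
        funext m
        rw [add_comm m k, pow_add, div_pow, one_pow, mul_one_div, div_div]
      rw [he, tsum_mul_left, tsum_geometric_two]
    calc ‖cc k‖ ≤ ∑' m, ‖if m = k then (0:E) else b m ⊓ b k‖ := h1
      _ ≤ ∑' m : ℕ, C / 2^(m+k) := h2
      _ = (C / 2^k) * 2 := h3
      _ = 2 * C / 2^k := by ring
  set d : ℕ → E := fun k => (b k - cc k) ⊔ 0 with hd
  have hd0 : ∀ k, 0 ≤ d k := fun k => le_sup_right
  have hdb : ∀ k, d k ≤ b k := fun k => sup_le (sub_le_self _ (hcc0 k)) (hb0 k)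
  have hddisj : ∀ m k, m ≠ k → d m ⊓ d k = 0 := by
    intro m k hmk
    have key : ∀ j j' : ℕ, j ≠ j' → d j ≤ b j - b j ⊓ b j' := by
      intro j j' hjj'
      have h1 : b j' ⊓ b j ≤ cc j := hccge j' j (fun e => hjj' e.symm)
      have h2 : d j ≤ (b j - b j ⊓ b j') ⊔ 0 := by
        refine sup_le_sup_right (sub_le_sub_left ?_ _) 0
        rw [inf_comm]
        exact h1
      have h3 : (b j - b j ⊓ b j') ⊔ 0 = b j - b j ⊓ b j' := by
        refine sup_eq_left.2 ?_
        exact sub_nonneg.2 inf_le_left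
      rwa [h3] at h2
    refine le_antisymm ?_ (le_inf (hd0 m) (hd0 k))
    have h4 : d m ⊓ d k ≤ (b m - b m ⊓ b k) ⊓ (b k - b m ⊓ b k) := by
      refine inf_le_inf (key m k hmk) ?_
      have := key k m (fun e => hmk e.symm)
      rwa [inf_comm (b k) (b m)] at this
    rw [lat_disj_sub_inf] at h4
    exact h4
  have hdtend : Tendsto (fun k => ‖d k‖) atTop (𝓝 0) := by
    refine hA.2 d (fun k => ⟨x (k+1), (hmain (k+1)).1, ?_⟩) (fun m k hmk => ?_)
    · rw [abs_of_nonneg (hd0 k)]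
      exact le_trans (hdb k) (le_trans (hbx k) (le_refl _))
    · show |d m| ⊓ |d k| = 0
      rw [abs_of_nonneg (hd0 m), abs_of_nonneg (hd0 k)]
      exact hddisj m k hmk
  have hdlow : ∀ k, ε' - 2*C/2^k ≤ ‖d k‖ := by
    intro k
    have h1 : b k ≤ d k + cc k := by
      have h2 : b k - cc k ≤ d k := le_sup_left
      have := add_le_add_left h2 (cc k)
      simpa using this
    have h3 : ‖b k‖ ≤ ‖d k‖ + ‖cc k‖ := by
      calc ‖b k‖ ≤ ‖d k + cc k‖ := norm_mono_of_le (hb0 k) h1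
        _ ≤ ‖d k‖ + ‖cc k‖ := norm_add_le _ _
    have h4 := hbnorm k
    have h5 := hccnorm k
    linarith
  have h2C : Tendsto (fun k : ℕ => 2*C/2^k) atTop (𝓝 0) := by
    have h81 : Tendsto (fun k : ℕ => (2*C) * (1/2:ℝ)^k) atTop (𝓝 ((2*C) * 0)) :=
      (tendsto_pow_atTop_nhds_zero_of_lt_one (by norm_num) (by norm_num)).const_mul (2*C)
    have he : (fun k : ℕ => 2*C/2^k) = fun k : ℕ => (2*C) * (1/2:ℝ)^k := by
      funext k; rw [div_pow]; ring
    rw [he]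
    simpa using h81
  have hev1 : ∀ᶠ k in atTop, ‖d k‖ < ε'/2 := hdtend.eventually_lt_const (by linarith)
  have hev2 : ∀ᶠ k in atTop, 2*C/2^k < ε'/2 := h2C.eventually_lt_const (by linarith)
  obtain ⟨k, hk1, hk2⟩ := (hev1.and hev2).exists
  have := hdlow k
  linarith

end LemmaT

section Final

set_option linter.unusedSectionVars false
set_option maxHeartbeats 1000000

variable {E : Type*} [NormedAddCommGroup E] [Lattice E] [HasSolidNorm E] [IsOrderedAddMonoid E] [NormedSpace ℝ E] [CompleteSpace E]

theorem stmt6' (A : Set E) (hA : LWeaklyCompact A) : AlmostLimited A := by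
  refine ⟨hA.1, ?_⟩
  intro f hdisj hwsn ε hε
  -- uniform bound on the family via Banach–Steinhaus
  have hpt : ∀ x : E, ∃ C', ∀ n, ‖f n x‖ ≤ C' := by
    intro x
    have ht : Tendsto (fun n => ‖f n x‖) atTop (𝓝 ‖(0:ℝ)‖) := (hwsn x).norm
    have hba : BddAbove (Set.range (fun n => ‖f n x‖)) := ht.bddAbove_range
    obtain ⟨C', hC'⟩ := hba
    exact ⟨C', fun n => hC' (Set.mem_range_self n)⟩
  obtain ⟨C'', hC''⟩ := banach_steinhaus hpt
  set M : ℝ := max C'' 1 with hM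
  have hM1 : 1 ≤ M := le_max_right _ _
  have hM0 : (0:ℝ) < M := lt_of_lt_of_le one_pos hM1
  have hfM : ∀ n, ‖f n‖ ≤ M := fun n => le_trans (hC'' n) (le_max_left _ _)
  have hε' : 0 < ε / (4*M) := by positivity
  obtain ⟨u, hu, hdn, hdec⟩ := lemmaT hA hε'
  have hav := av_null hu hdn f hdisj hM1 hfM
  have hev : ∀ᶠ n in atTop, absVal (f n) u < ε/2 :=
    hav.eventually_lt_const (by linarith)
  filter_upwards [hev] with n hn
  intro x hx
  obtain ⟨b, r, rfl, hb, hr⟩ := hdec x hx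
  have h1 : |f n b| ≤ absVal (f n) u := abs_le_av (f n) hu hb
  have h2 : |f n r| ≤ M * (ε / (4*M)) := by
    have h3 : ‖f n r‖ ≤ ‖f n‖ * ‖r‖ := (f n).le_opNorm r
    have h4 : ‖f n‖ * ‖r‖ ≤ M * (ε / (4*M)) :=
      mul_le_mul (hfM n) hr (norm_nonneg r) hM0.le
    rw [Real.norm_eq_abs] at h3
    linarith
  have h5 : M * (ε / (4*M)) = ε/4 := by field_simp
  have h6 : |f n (b + r)| ≤ |f n b| + |f n r| := by
    rw [map_add]
    exact abs_add_le _ _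
  calc |f n (b + r)| ≤ |f n b| + |f n r| := h6
    _ ≤ absVal (f n) u + ε/4 := by rw [← h5]; exact add_le_add h1 h2
    _ < ε/2 + ε/4 := by linarith
    _ < ε := by linarith

end Final

theorem stmt6'' {E : Type*} [NormedAddCommGroup E] [Lattice E] [HasSolidNorm E] [IsOrderedAddMonoid E] [NormedSpace ℝ E] [CompleteSpace E]
    (A : Set E) (hA : LWeaklyCompact A) :
    AlmostLimited A := stmt6' A hA


/-- Every L-weakly compact subset of a Banach lattice is almost limited. -/
theorem stmt6 {E : Type*} [NormedAddCommGroup E] [Lattice E] [HasSolidNorm E] [IsOrderedAddMonoid E] [NormedSpace ℝ E] [CompleteSpace E]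
    (A : Set E) (hA : LWeaklyCompact A) :
    AlmostLimited A := stmt6' A hA
end

section
/- If every almost L-set in E* is L-weakly compact, then E* has order continuous norm. -/
open Filter Topology

section AuxSec
namespace Stmt9Aux

variable {E : Type*} [NormedAddCommGroup E] [Lattice E] [HasSolidNorm E] [IsOrderedAddMonoid E] [NormedSpace ℝ E]

lemma norm_mono_cone {z x : E} (hz : 0 ≤ z) (hzx : z ≤ x) : ‖z‖ ≤ ‖x‖ :=
  HasSolidNorm.solid (by rwa [abs_of_nonneg hz, abs_of_nonneg (hz.trans hzx)])

lemma apply_mono_cone (f : E →L[ℝ] ℝ) (hf : ∀ y : E, 0 ≤ y → 0 ≤ f y) {z x : E}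
    (h : z ≤ x) : f z ≤ f x := by
  have h0 : (0:ℝ) ≤ f (x - z) := hf _ (sub_nonneg.mpr h)
  rw [map_sub] at h0; linarith

lemma riesz_decomp {x y z : E} (hz0 : 0 ≤ z) (hzxy : z ≤ x + y) (hx : 0 ≤ x) (hy : 0 ≤ y) :
    ∃ u v : E, 0 ≤ u ∧ u ≤ x ∧ 0 ≤ v ∧ v ≤ y ∧ z = u + v := by
  refine ⟨z ⊓ x, z - z ⊓ x, ?_, inf_le_right, sub_nonneg.mpr inf_le_left, ?_, by abel⟩
  ·
    exact le_inf hz0 hx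
  · have h1 : z - z ⊓ x = (z - z) ⊔ (z - x) := by rw [sub_inf]
    rw [h1, sub_self]
    exact sup_le hy (sub_le_iff_le_add'.mpr hzxy)

/-- Extend an additive bounded function on the positive cone to a continuous linear
functional. -/
lemma exists_coneExtend (p : E → ℝ) (C : ℝ)
    (hadd : ∀ x y : E, 0 ≤ x → 0 ≤ y → p (x + y) = p x + p y)
    (hbdd : ∀ x : E, 0 ≤ x → |p x| ≤ C * ‖x‖) :
    ∃ Φ : E →L[ℝ] ℝ, ∀ x : E, 0 ≤ x → Φ x = p x := by
  have hp0 : p 0 = 0 := by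
    have := hadd 0 0 le_rfl le_rfl; simp at this; linarith
  set M := |C| with hM
  have hbdd' : ∀ x : E, 0 ≤ x → |p x| ≤ M * ‖x‖ := by
    intro x hx
    exact (hbdd x hx).trans (by
      have : C ≤ M := le_abs_self C
      have := norm_nonneg x
      nlinarith)
  set q : E → ℝ := fun x => p (x⁺) - p (x⁻) with hq
  have hqadd : ∀ a b : E, q (a + b) = q a + q b := by
    intro a b
    have h1 : (a+b)⁺ - (a+b)⁻ = (a⁺ + b⁺) - (a⁻ + b⁻) := by
      rw [posPart_sub_negPart]
      have ha := posPart_sub_negPart a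
      have hb := posPart_sub_negPart b
      have : (a⁺ + b⁺) - (a⁻ + b⁻) = (a⁺ - a⁻) + (b⁺ - b⁻) := by abel
      rw [this, ha, hb]
    have key : (a+b)⁺ + (a⁻ + b⁻) = (a⁺ + b⁺) + (a+b)⁻ := by
      have := sub_eq_sub_iff_add_eq_add.mp h1
      exact this
    have e1 : p ((a+b)⁺ + (a⁻ + b⁻)) = p ((a+b)⁺) + (p (a⁻) + p (b⁻)) := by
      rw [hadd _ _ (posPart_nonneg _) (add_nonneg (negPart_nonneg _) (negPart_nonneg _)),
        hadd _ _ (negPart_nonneg _) (negPart_nonneg _)]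
    have e2 : p ((a⁺ + b⁺) + (a+b)⁻) = (p (a⁺) + p (b⁺)) + p ((a+b)⁻) := by
      rw [hadd _ _ (add_nonneg (posPart_nonneg _) (posPart_nonneg _)) (negPart_nonneg _),
        hadd _ _ (posPart_nonneg _) (posPart_nonneg _)]
    have e3 : p ((a+b)⁺) + (p (a⁻) + p (b⁻)) = (p (a⁺) + p (b⁺)) + p ((a+b)⁻) := by
      rw [← e1, ← e2, key]
    simp only [hq]; linarith
  have hqbdd : ∀ x : E, |q x| ≤ 2 * M * ‖x‖ := by
    intro x
    have h1 : |p (x⁺)| ≤ M * ‖x‖ := by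
      refine (hbdd' _ (posPart_nonneg _)).trans ?_
      have : ‖(x⁺ : E)‖ ≤ ‖x‖ := by
        refine HasSolidNorm.solid ?_
        rw [abs_of_nonneg (posPart_nonneg x)]
        rw [← posPart_add_negPart x]
        exact le_add_of_nonneg_right (negPart_nonneg _)
      have hM0 : (0:ℝ) ≤ M := abs_nonneg C
      nlinarith
    have h2 : |p (x⁻)| ≤ M * ‖x‖ := by
      refine (hbdd' _ (negPart_nonneg _)).trans ?_
      have : ‖(x⁻ : E)‖ ≤ ‖x‖ := by
        refine HasSolidNorm.solid ?_
        rw [abs_of_nonneg (negPart_nonneg x)]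
        rw [← posPart_add_negPart x]
        exact le_add_of_nonneg_left (posPart_nonneg _)
      have hM0 : (0:ℝ) ≤ M := abs_nonneg C
      nlinarith
    calc |q x| ≤ |p (x⁺)| + |p (x⁻)| := abs_sub _ _
    _ ≤ 2 * M * ‖x‖ := by linarith
  set hom : E →+ ℝ := AddMonoidHom.mk' q hqadd with hhom
  have hcont : Continuous hom := by
    have hlip : LipschitzWith (Real.toNNReal (2*M)) hom := by
      refine LipschitzWith.of_dist_le_mul (fun a b => ?_)
      have heq : hom a - hom b = hom (a - b) := (map_sub hom a b).symm
      rw [Real.dist_eq, dist_eq_norm, heq]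
      have h2M : ((Real.toNNReal (2*M) : NNReal) : ℝ) = 2*M :=
        Real.coe_toNNReal _ (by positivity)
      rw [h2M]
      show |hom (a - b)| ≤ 2*M*‖a-b‖
      exact hqbdd (a-b)
    exact hlip.continuous
  set Φlin := hom.toRealLinearMap hcont with hΦlin
  have hΦeq : ∀ x, Φlin x = q x := fun x => rfl
  refine ⟨Φlin, ?_⟩
  intro x hx
  have h1 : (x⁺ : E) = x := posPart_eq_self.mpr hx
  have h2 : (x⁻ : E) = 0 := negPart_eq_zero.mpr hx
  show Φlin x = p x
  rw [hΦeq]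
  simp only [hq, h1, h2, hp0, sub_zero]


/-- The Riesz–Kantorovich positive-part value on the cone. -/
noncomputable def posP (φ : E →L[ℝ] ℝ) (x : E) : ℝ :=
  sSup ((fun z => φ z) '' {z | 0 ≤ z ∧ z ≤ x})

lemma posP_set_nonempty (φ : E →L[ℝ] ℝ) {x : E} (hx : 0 ≤ x) :
    ((fun z => φ z) '' {z | 0 ≤ z ∧ z ≤ x}).Nonempty :=
  ⟨φ 0, 0, ⟨le_rfl, hx⟩, rfl⟩

lemma posP_bddAbove (φ : E →L[ℝ] ℝ) (x : E) :
    BddAbove ((fun z => φ z) '' {z | 0 ≤ z ∧ z ≤ x}) := by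
  refine ⟨‖φ‖ * ‖x‖, ?_⟩
  rintro r ⟨z, ⟨hz0, hzx⟩, rfl⟩
  calc φ z ≤ |φ z| := le_abs_self _
  _ ≤ ‖φ‖ * ‖z‖ := φ.le_opNorm z
  _ ≤ ‖φ‖ * ‖x‖ := by
      have := norm_mono_cone hz0 hzx
      have := norm_nonneg φ
      nlinarith

lemma posP_ge (φ : E →L[ℝ] ℝ) {x z : E} (hz0 : 0 ≤ z) (hzx : z ≤ x) :
    φ z ≤ posP φ x :=
  le_csSup (posP_bddAbove φ x) ⟨z, ⟨hz0, hzx⟩, rfl⟩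

lemma posP_nonneg (φ : E →L[ℝ] ℝ) {x : E} (hx : 0 ≤ x) : 0 ≤ posP φ x := by
  have := posP_ge φ (le_refl (0:E)) hx
  simpa using this

lemma posP_le (φ : E →L[ℝ] ℝ) {x : E} (hx : 0 ≤ x) {B : ℝ}
    (hB : ∀ z : E, 0 ≤ z → z ≤ x → φ z ≤ B) : posP φ x ≤ B := by
  refine csSup_le (posP_set_nonempty φ hx) ?_
  rintro r ⟨z, ⟨hz0, hzx⟩, rfl⟩
  exact hB z hz0 hzx

lemma posP_witness (φ : E →L[ℝ] ℝ) {x : E} (hx : 0 ≤ x) {c : ℝ}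
    (hc : c < posP φ x) : ∃ z : E, 0 ≤ z ∧ z ≤ x ∧ c < φ z := by
  obtain ⟨r, ⟨z, ⟨hz0, hzx⟩, rfl⟩, hr⟩ :=
    exists_lt_of_lt_csSup (posP_set_nonempty φ hx) hc
  exact ⟨z, hz0, hzx, hr⟩

lemma posP_mono_fn {φ ψ : E →L[ℝ] ℝ} {x : E} (hx : 0 ≤ x)
    (h : ∀ z : E, 0 ≤ z → z ≤ x → φ z ≤ ψ z) : posP φ x ≤ posP ψ x :=
  posP_le φ hx (fun z hz0 hzx => (h z hz0 hzx).trans (posP_ge ψ hz0 hzx))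

lemma posP_abs_le (φ : E →L[ℝ] ℝ) {x : E} (hx : 0 ≤ x) :
    |posP φ x| ≤ ‖φ‖ * ‖x‖ := by
  rw [abs_of_nonneg (posP_nonneg φ hx)]
  refine posP_le φ hx (fun z hz0 hzx => ?_)
  calc φ z ≤ |φ z| := le_abs_self _
  _ ≤ ‖φ‖ * ‖z‖ := φ.le_opNorm z
  _ ≤ ‖φ‖ * ‖x‖ := by
      have := norm_mono_cone hz0 hzx
      have := norm_nonneg φ
      nlinarith

lemma posP_add (φ : E →L[ℝ] ℝ) {x y : E} (hx : 0 ≤ x) (hy : 0 ≤ y) :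
    posP φ (x + y) = posP φ x + posP φ y := by
  refine le_antisymm ?_ ?_
  · refine posP_le φ (add_nonneg hx hy) (fun z hz0 hzxy => ?_)
    obtain ⟨u, v, hu0, hux, hv0, hvy, rfl⟩ := riesz_decomp hz0 hzxy hx hy
    rw [map_add]
    exact add_le_add (posP_ge φ hu0 hux) (posP_ge φ hv0 hvy)
  · rw [← sub_nonneg]
    have h1 : posP φ x ≤ posP φ (x+y) - posP φ y := by
      refine posP_le φ hx (fun u hu0 hux => ?_)
      rw [le_sub_iff_add_le, add_comm]
      have h2 : posP φ y ≤ posP φ (x+y) - φ u := by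
        refine posP_le φ hy (fun v hv0 hvy => ?_)
        rw [le_sub_iff_add_le, add_comm]
        have : φ u + φ v = φ (u + v) := (map_add φ u v).symm
        rw [this]
        exact posP_ge φ (add_nonneg hu0 hv0) (add_le_add hux hvy)
      linarith
    linarith

lemma exists_posFun (φ : E →L[ℝ] ℝ) :
    ∃ Ψ : E →L[ℝ] ℝ, ∀ x : E, 0 ≤ x → Ψ x = posP φ x :=
  exists_coneExtend (posP φ) ‖φ‖ (fun x y hx hy => posP_add φ hx hy)
    (fun x hx => posP_abs_le φ hx)

lemma ciSup_add_mono {a b : ℕ → ℝ} (ha : Monotone a) (hA : BddAbove (Set.range a))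
    (hb : Monotone b) (hB : BddAbove (Set.range b)) :
    (⨆ j, (a j + b j)) = (⨆ j, a j) + (⨆ j, b j) := by
  have t1 := tendsto_atTop_ciSup ha hA
  have t2 := tendsto_atTop_ciSup hb hB
  have hab : Monotone (fun j => a j + b j) := fun i j hij => add_le_add (ha hij) (hb hij)
  have hAB : BddAbove (Set.range fun j => a j + b j) := by
    obtain ⟨u, hu⟩ := hA; obtain ⟨v, hv⟩ := hB
    refine ⟨u + v, ?_⟩
    rintro r ⟨j, rfl⟩
    exact add_le_add (hu ⟨j, rfl⟩) (hv ⟨j, rfl⟩)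
  have t3 := tendsto_atTop_ciSup hab hAB
  exact tendsto_nhds_unique t3 (t1.add t2)

lemma exists_Pw (φ w : E →L[ℝ] ℝ) (hφ : ∀ x : E, 0 ≤ x → 0 ≤ φ x)
    (hw : ∀ x : E, 0 ≤ x → 0 ≤ w x) :
    ∃ P : E →L[ℝ] ℝ, ∀ x : E, 0 ≤ x →
      P x = ⨆ j : ℕ, (φ x - posP (φ - (j:ℝ) • w) x) := by
  set M : ℕ → E → ℝ := fun j x => φ x - posP (φ - (j:ℝ) • w) x with hM
  have hMle : ∀ (j : ℕ) (x : E), 0 ≤ x → M j x ≤ φ x := by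
    intro j x hx
    have := posP_nonneg (φ - (j:ℝ) • w) hx
    simp only [hM]; linarith
  have hM0 : ∀ (j : ℕ) (x : E), 0 ≤ x → 0 ≤ M j x := by
    intro j x hx
    have : posP (φ - (j:ℝ) • w) x ≤ φ x := by
      refine posP_le _ hx (fun z hz0 hzx => ?_)
      have h1 : (φ - (j:ℝ) • w) z = φ z - (j:ℝ) * w z := by
        simp [ContinuousLinearMap.sub_apply, ContinuousLinearMap.smul_apply, smul_eq_mul]
      have h2 : 0 ≤ (j:ℝ) * w z := mul_nonneg (by positivity) (hw z hz0)
      have h3 : φ z ≤ φ x := apply_mono_cone φ hφ hzx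
      rw [h1]; linarith
    simp only [hM]; linarith
  have hMbdd : ∀ x : E, 0 ≤ x → BddAbove (Set.range fun j : ℕ => M j x) := by
    intro x hx
    exact ⟨φ x, by rintro r ⟨j, rfl⟩; exact hMle j x hx⟩
  have hMmono : ∀ x : E, 0 ≤ x → Monotone (fun j : ℕ => M j x) := by
    intro x hx i j hij
    have : posP (φ - (j:ℝ) • w) x ≤ posP (φ - (i:ℝ) • w) x := by
      refine posP_mono_fn hx (fun z hz0 hzx => ?_)
      have h1 : (φ - (j:ℝ) • w) z = φ z - (j:ℝ) * w z := by
        simp [ContinuousLinearMap.sub_apply, ContinuousLinearMap.smul_apply, smul_eq_mul]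
      have h2 : (φ - (i:ℝ) • w) z = φ z - (i:ℝ) * w z := by
        simp [ContinuousLinearMap.sub_apply, ContinuousLinearMap.smul_apply, smul_eq_mul]
      have h3 : (i:ℝ) * w z ≤ (j:ℝ) * w z :=
        mul_le_mul_of_nonneg_right (by exact_mod_cast hij) (hw z hz0)
      rw [h1, h2]; linarith
    simp only [hM]; linarith
  have hMadd : ∀ (j : ℕ) (x y : E), 0 ≤ x → 0 ≤ y → M j (x + y) = M j x + M j y := by
    intro j x y hx hy
    simp only [hM, map_add, posP_add (φ - (j:ℝ) • w) hx hy]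
    ring
  refine exists_coneExtend (fun x => ⨆ j : ℕ, M j x) ‖φ‖ ?_ ?_
  · intro x y hx hy
    have h1 : (⨆ j : ℕ, M j (x + y)) = ⨆ j : ℕ, (M j x + M j y) := by
      congr 1; funext j; exact hMadd j x y hx hy
    show (⨆ j : ℕ, M j (x + y)) = (⨆ j : ℕ, M j x) + (⨆ j : ℕ, M j y)
    rw [h1]
    exact ciSup_add_mono (hMmono x hx) (hMbdd x hx) (hMmono y hy) (hMbdd y hy)
  · intro x hx
    have hub : (⨆ j : ℕ, M j x) ≤ φ x := ciSup_le (fun j => hMle j x hx)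
    have hlb : 0 ≤ ⨆ j : ℕ, M j x :=
      (hM0 0 x hx).trans (le_ciSup (hMbdd x hx) 0)
    have : φ x ≤ ‖φ‖ * ‖x‖ := (le_abs_self _).trans (φ.le_opNorm x)
    show |⨆ j : ℕ, M j x| ≤ ‖φ‖ * ‖x‖
    rw [abs_of_nonneg hlb]
    linarith


lemma absVal_of_pos (φ : E →L[ℝ] ℝ) (hφ : ∀ y : E, 0 ≤ y → 0 ≤ φ y) {x : E}
    (hx : 0 ≤ x) : absVal φ x = φ x := by
  unfold absVal
  have hbdd : BddAbove ((fun y => φ y) '' {y : E | |y| ≤ x}) := by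
    refine ⟨φ x, ?_⟩
    rintro r ⟨y, hy, rfl⟩
    have h1 : φ y ≤ φ |y| := apply_mono_cone φ hφ (le_abs_self y)
    have h2 : φ |y| ≤ φ x := apply_mono_cone φ hφ hy
    linarith
  refine le_antisymm (csSup_le ⟨φ x, ⟨x, by simpa [abs_of_nonneg hx], rfl⟩⟩ ?_) ?_
  · rintro r ⟨y, hy, rfl⟩
    have h1 : φ y ≤ φ |y| := apply_mono_cone φ hφ (le_abs_self y)
    have h2 : φ |y| ≤ φ x := apply_mono_cone φ hφ hy
    linarith
  · exact le_csSup hbdd ⟨x, by simpa [abs_of_nonneg hx], rfl⟩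

lemma exists_unit_big (f : E →L[ℝ] ℝ) (hf : ∀ y : E, 0 ≤ y → 0 ≤ f y) {c : ℝ}
    (hc0 : 0 ≤ c) (hc : c < ‖f‖) : ∃ x : E, 0 ≤ x ∧ ‖x‖ ≤ 1 ∧ c < f x := by
  by_contra hcon
  push_neg at hcon
  have hb : ∀ y : E, ‖y‖ ≤ 1 → |f y| ≤ c := by
    intro y hy
    have h0 : 0 ≤ |y| := abs_nonneg y
    have h1 : ‖|y|‖ ≤ 1 := by rwa [norm_abs_eq_norm]
    have h2 : f |y| ≤ c := hcon _ h0 h1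
    have h3 : f y ≤ f |y| := apply_mono_cone f hf (le_abs_self y)
    have h4 : - f y ≤ f |y| := by
      have : f (-y) ≤ f |y| := apply_mono_cone f hf (neg_le_abs y)
      simpa using this
    rw [abs_le]; constructor <;> linarith
  have : ‖f‖ ≤ c := by
    refine f.opNorm_le_bound hc0 (fun y => ?_)
    rcases eq_or_ne y 0 with rfl | hy0
    · simp
    · have hny : 0 < ‖y‖ := norm_pos_iff.mpr hy0
      have hu : ‖(‖y‖⁻¹ • y : E)‖ ≤ 1 := by
        rw [norm_smul, norm_inv, norm_norm]
        rw [inv_mul_cancel₀ hny.ne']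
      have := hb _ hu
      rw [map_smul] at this
      have h5 : |(‖y‖⁻¹ : ℝ)| * |f y| ≤ c := by
        simpa [smul_eq_mul, abs_mul] using this
      rw [abs_of_nonneg (by positivity : (0:ℝ) ≤ (‖y‖⁻¹:ℝ))] at h5
      rw [Real.norm_eq_abs]
      calc |f y| = ‖y‖ * (‖y‖⁻¹ * |f y|) := by field_simp
      _ ≤ ‖y‖ * c := by nlinarith
      _ = c * ‖y‖ := by ring
  linarith

lemma funDisjoint_of_witness (u v : E →L[ℝ] ℝ)
    (hu : ∀ y : E, 0 ≤ y → 0 ≤ u y) (hv : ∀ y : E, 0 ≤ y → 0 ≤ v y)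
    (hwit : ∀ x : E, 0 ≤ x → ∀ η : ℝ, 0 < η →
      ∃ z : E, 0 ≤ z ∧ z ≤ x ∧ u z + v (x - z) < η) :
    FunDisjoint u v := by
  intro x hx
  have hval : ∀ y : E, 0 ≤ y → y ≤ x →
      absVal u y + absVal v (x - y) = u y + v (x - y) := by
    intro y hy0 hyx
    rw [absVal_of_pos u hu hy0, absVal_of_pos v hv (sub_nonneg.mpr hyx)]
  have hbdd : BddBelow ((fun y => absVal u y + absVal v (x - y)) '' {y : E | 0 ≤ y ∧ y ≤ x}) := by
    refine ⟨0, ?_⟩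
    rintro r ⟨y, ⟨hy0, hyx⟩, rfl⟩
    show 0 ≤ absVal u y + absVal v (x - y)
    rw [hval y hy0 hyx]
    have := hu y hy0
    have := hv (x - y) (sub_nonneg.mpr hyx)
    linarith
  refine le_antisymm ?_ ?_
  · refine le_of_forall_pos_le_add (fun η hη => ?_)
    obtain ⟨z, hz0, hzx, hz⟩ := hwit x hx η hη
    have hmem : absVal u z + absVal v (x - z) ∈
        (fun y => absVal u y + absVal v (x - y)) '' {y : E | 0 ≤ y ∧ y ≤ x} :=
      ⟨z, ⟨hz0, hzx⟩, rfl⟩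
    have := csInf_le hbdd hmem
    rw [hval z hz0 hzx] at this
    linarith
  · refine le_csInf ⟨_, ⟨x, ⟨hx, le_rfl⟩, rfl⟩⟩ ?_
    rintro r ⟨y, ⟨hy0, hyx⟩, rfl⟩
    show 0 ≤ absVal u y + absVal v (x - y)
    rw [hval y hy0 hyx]
    have := hu y hy0
    have := hv (x - y) (sub_nonneg.mpr hyx)
    linarith

lemma funle_chain {F : ℕ → E →L[ℝ] ℝ} (hF : ∀ n, FunLe (F (n+1)) (F n)) :
    ∀ k m : ℕ, k ≤ m → FunLe (F m) (F k) := by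
  intro k m hkm
  induction m with
  | zero => have : k = 0 := Nat.le_zero.mp hkm; subst this; intro x hx; exact le_rfl
  | succ n ih =>
    rcases Nat.lt_or_ge k (n+1) with h | h
    · have hkn : k ≤ n := Nat.lt_succ_iff.mp h
      intro x hx
      exact (hF n x hx).trans (ih hkn x hx)
    · have : k = n+1 := le_antisymm hkm h
      subst this; intro x hx; exact le_rfl

lemma exists_seq {A : Set (E →L[ℝ] ℝ)} (f₀ : E →L[ℝ] ℝ) (hf₀ : f₀ ∈ A)
    (δ'' ε : ℝ)
    (hApos : ∀ f ∈ A, ∀ x : E, 0 ≤ x → 0 ≤ f x)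
    (hwit : ∀ f ∈ A, ∃ x : E, 0 ≤ x ∧ ‖x‖ ≤ 1 ∧ ε/2 < f x)
    (hnext : ∀ f ∈ A, ∀ Sv : E, 0 ≤ Sv → ∃ g ∈ A, FunLe g f ∧ g Sv < δ'') :
    ∃ (F : ℕ → E →L[ℝ] ℝ) (X : ℕ → E),
      F 0 = f₀ ∧ (∀ n, F n ∈ A) ∧ (∀ n, 0 ≤ X n) ∧ (∀ n, ‖X n‖ ≤ 1) ∧
      (∀ n, ε/2 < F n (X n)) ∧ (∀ n, FunLe (F (n+1)) (F n)) ∧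
      (∀ k m : ℕ, k < m → F m (X k) < δ'') := by
  classical
  choose xw hxw0 hxw1 hxw2 using hwit
  choose nxt hnA hnle hnsm using hnext
  let State := {q : (E →L[ℝ] ℝ) × E // q.1 ∈ A ∧ 0 ≤ q.2}
  let step : State → State := fun q =>
    ⟨(nxt q.1.1 q.2.1 (q.1.2 + xw q.1.1 q.2.1)
        (add_nonneg q.2.2 (hxw0 q.1.1 q.2.1)),
      q.1.2 + xw q.1.1 q.2.1),
     hnA q.1.1 q.2.1 _ (add_nonneg q.2.2 (hxw0 q.1.1 q.2.1)),
     add_nonneg q.2.2 (hxw0 q.1.1 q.2.1)⟩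
  let seq : ℕ → State := fun n => Nat.rec ⟨(f₀, 0), hf₀, le_rfl⟩ (fun _ q => step q) n
  have hseq : ∀ n, seq (n+1) = step (seq n) := fun n => rfl
  let F : ℕ → E →L[ℝ] ℝ := fun n => (seq n).1.1
  let X : ℕ → E := fun n => xw (F n) (seq n).2.1
  have hFA : ∀ n, F n ∈ A := fun n => (seq n).2.1
  have hXpos : ∀ n, 0 ≤ X n := fun n => hxw0 _ _
  have hFle : ∀ n, FunLe (F (n+1)) (F n) := fun n => hnle (F n) (seq n).2.1 _ _
  have hkey : ∀ n, (F (n+1)) ((seq n).1.2 + X n) < δ'' := fun n => hnsm (F n) (seq n).2.1 _ _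
  refine ⟨F, X, rfl, hFA, hXpos, fun n => hxw1 _ _, fun n => hxw2 _ _, hFle, ?_⟩
  intro k m hkm
  have hSpos : 0 ≤ (seq k).1.2 := (seq k).2.2
  have h1 : X k ≤ (seq k).1.2 + X k := le_add_of_nonneg_left hSpos
  have h2 : F (k+1) (X k) ≤ F (k+1) ((seq k).1.2 + X k) :=
    apply_mono_cone _ (hApos _ (hFA (k+1))) h1
  have h3 : F m (X k) ≤ F (k+1) (X k) :=
    funle_chain hFle (k+1) m hkm (X k) (hXpos k)
  have h4 := hkey k
  linarith

end Stmt9Aux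
end AuxSec

set_option maxHeartbeats 4000000 in
/-- If every almost L-set in `E*` is L-weakly compact, then the norm of `E*` is
order continuous. -/
theorem stmt9 {E : Type*} [NormedAddCommGroup E] [Lattice E] [HasSolidNorm E] [IsOrderedAddMonoid E] [NormedSpace ℝ E] [CompleteSpace E]
    (h : ∀ B : Set (E →L[ℝ] ℝ), AlmostLSet B → DualLWeaklyCompact B) :
    DualOrderContinuousNorm E := by
  intro A hne hdir hpos hglb ε hε
  by_contra hcon
  push_neg at hcon
  classical
  obtain ⟨fA, hfA⟩ := hne
  have hApos : ∀ f ∈ A, ∀ x : E, 0 ≤ x → 0 ≤ f x := by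
    intro f hf x hx
    have := hpos f hf x hx
    simpa using this
  -- pointwise infimum over A
  set p : E → ℝ := fun x => sInf ((fun f : E →L[ℝ] ℝ => f x) '' A) with hpdef
  have hpne : ∀ x : E, ((fun f : E →L[ℝ] ℝ => f x) '' A).Nonempty :=
    fun x => ⟨fA x, fA, hfA, rfl⟩
  have hpbdd : ∀ x : E, 0 ≤ x → BddBelow ((fun f : E →L[ℝ] ℝ => f x) '' A) := by
    intro x hx
    exact ⟨0, by rintro r ⟨f, hf, rfl⟩; exact hApos f hf x hx⟩
  have hple : ∀ x : E, 0 ≤ x → ∀ f ∈ A, p x ≤ f x :=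
    fun x hx f hf => csInf_le (hpbdd x hx) ⟨f, hf, rfl⟩
  have hp0 : ∀ x : E, 0 ≤ x → 0 ≤ p x :=
    fun x hx => le_csInf (hpne x) (by rintro r ⟨f, hf, rfl⟩; exact hApos f hf x hx)
  have hpadd : ∀ x y : E, 0 ≤ x → 0 ≤ y → p (x + y) = p x + p y := by
    intro x y hx hy
    refine le_antisymm ?_ ?_
    · refine le_of_forall_pos_le_add (fun η hη => ?_)
      obtain ⟨r1, ⟨f1, hf1, rfl⟩, hr1⟩ :=
        exists_lt_of_csInf_lt (hpne x) (by linarith : p x < p x + η/2)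
      obtain ⟨r2, ⟨f2, hf2, rfl⟩, hr2⟩ :=
        exists_lt_of_csInf_lt (hpne y) (by linarith : p y < p y + η/2)
      obtain ⟨hh, hhA, hhf1, hhf2⟩ := hdir f1 hf1 f2 hf2
      have h3 : p (x+y) ≤ hh (x+y) := hple _ (add_nonneg hx hy) hh hhA
      rw [map_add] at h3
      have h4 := hhf1 x hx
      have h5 := hhf2 y hy
      linarith
    · refine le_csInf (hpne (x+y)) ?_
      rintro r ⟨f, hf, rfl⟩
      show p x + p y ≤ f (x + y)
      rw [map_add]
      exact add_le_add (hple x hx f hf) (hple y hy f hf)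
  have hpabs : ∀ x : E, 0 ≤ x → |p x| ≤ ‖fA‖ * ‖x‖ := by
    intro x hx
    rw [abs_of_nonneg (hp0 x hx)]
    calc p x ≤ fA x := hple x hx fA hfA
    _ ≤ |fA x| := le_abs_self _
    _ ≤ ‖fA‖ * ‖x‖ := fA.le_opNorm x
  obtain ⟨G, hG⟩ := Stmt9Aux.exists_coneExtend p ‖fA‖ hpadd hpabs
  have hGle : ∀ f ∈ A, FunLe G f := by
    intro f hf x hx
    rw [hG x hx]
    exact hple x hx f hf
  have hG0 : FunLe G 0 := hglb G hGle
  have key1 : ∀ x : E, 0 ≤ x → ∀ δv : ℝ, 0 < δv → ∃ f ∈ A, f x < δv := by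
    intro x hx δv hδv
    by_contra hc
    push_neg at hc
    have h1 : δv ≤ p x := le_csInf (hpne x) (by rintro r ⟨f, hf, rfl⟩; exact hc f hf)
    have h2 := hG0 x hx
    rw [hG x hx] at h2
    simp only [ContinuousLinearMap.zero_apply] at h2
    linarith
  -- constants
  set δ : ℝ := ε/(8*(‖fA‖+1)) with hδdef
  have hδpos : 0 < δ := div_pos hε (by positivity)
  set j₁ : ℕ := Nat.ceil δ⁻¹ with hj₁def
  have hj₁0 : (0:ℝ) ≤ (j₁:ℝ) := by positivity
  have hj₁ : 1 ≤ (j₁:ℝ) * δ := by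
    have hle : δ⁻¹ ≤ (j₁:ℝ) := Nat.le_ceil δ⁻¹
    have h2 := mul_le_mul_of_nonneg_right hle hδpos.le
    rwa [inv_mul_cancel₀ hδpos.ne'] at h2
  set δ'' : ℝ := ε/(8*((j₁:ℝ)+1)) with hδ''def
  have hδ''pos : 0 < δ'' := div_pos hε (by positivity)
  -- the decreasing sequence and its witnesses
  have hwitA : ∀ f ∈ A, ∃ x : E, 0 ≤ x ∧ ‖x‖ ≤ 1 ∧ ε/2 < f x := by
    intro f hf
    exact Stmt9Aux.exists_unit_big f (hApos f hf) (by linarith)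
      (lt_of_lt_of_le (by linarith) (hcon f hf))
  have hnextA : ∀ f ∈ A, ∀ Sv : E, 0 ≤ Sv → ∃ g ∈ A, FunLe g f ∧ g Sv < δ'' := by
    intro f hf Sv hSv
    obtain ⟨f', hf', hf'small⟩ := key1 Sv hSv δ'' hδ''pos
    obtain ⟨g0, hg0, hgf, hgf'⟩ := hdir f hf f' hf'
    exact ⟨g0, hg0, hgf, lt_of_le_of_lt (hgf' Sv hSv) hf'small⟩
  obtain ⟨F, X, hF0, hFA, hX0, hX1, hXb, hFstep, hcross⟩ :=
    Stmt9Aux.exists_seq fA hfA δ'' ε hApos hwitA hnextA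
  have hchain := Stmt9Aux.funle_chain hFstep
  have hFpos : ∀ n, ∀ x : E, 0 ≤ x → 0 ≤ F n x := fun n => hApos _ (hFA n)
  have hFleF0 : ∀ n, ∀ x : E, 0 ≤ x → F n x ≤ fA x := by
    intro n x hx
    have := hchain 0 n (Nat.zero_le n) x hx
    rwa [hF0] at this
  -- the w functionals
  have hwex : ∀ k : ℕ, ∃ W : E →L[ℝ] ℝ, ∀ x : E, 0 ≤ x →
      W x = Stmt9Aux.posP (δ • fA - F k) x :=
    fun k => Stmt9Aux.exists_posFun _
  choose w hw using hwex
  have hwpos : ∀ k, ∀ x : E, 0 ≤ x → 0 ≤ w k x := by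
    intro k x hx
    rw [hw k x hx]
    exact Stmt9Aux.posP_nonneg _ hx
  have hwlb : ∀ k, ∀ z : E, 0 ≤ z → δ * fA z - F k z ≤ w k z := by
    intro k z hz
    rw [hw k z hz]
    have := Stmt9Aux.posP_ge (δ • fA - F k) hz (le_refl z)
    simpa [ContinuousLinearMap.sub_apply, ContinuousLinearMap.smul_apply, smul_eq_mul]
      using this
  have hwmono : ∀ k m : ℕ, k ≤ m → ∀ x : E, 0 ≤ x → w k x ≤ w m x := by
    intro k m hkm x hx
    rw [hw k x hx, hw m x hx]
    refine Stmt9Aux.posP_mono_fn hx (fun z hz0 hzx => ?_)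
    have := hchain k m hkm z hz0
    simp only [ContinuousLinearMap.sub_apply, ContinuousLinearMap.smul_apply, smul_eq_mul]
    linarith
  -- the P functionals
  have hPex : ∀ k i : ℕ, ∃ P : E →L[ℝ] ℝ, ∀ x : E, 0 ≤ x →
      P x = ⨆ j : ℕ, (F k x - Stmt9Aux.posP (F k - (j:ℝ) • w i) x) :=
    fun k i => Stmt9Aux.exists_Pw (F k) (w i) (hFpos k) (hwpos i)
  choose P hP using hPex
  have hMbdd : ∀ k i (x : E), 0 ≤ x →
      BddAbove (Set.range fun j : ℕ => F k x - Stmt9Aux.posP (F k - (j:ℝ) • w i) x) := by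
    intro k i x hx
    refine ⟨F k x, ?_⟩
    rintro r ⟨j, rfl⟩
    show F k x - Stmt9Aux.posP (F k - (j:ℝ) • w i) x ≤ F k x
    have := Stmt9Aux.posP_nonneg (F k - (j:ℝ) • w i) hx
    linarith
  have hPleF : ∀ k i (x : E), 0 ≤ x → P k i x ≤ F k x := by
    intro k i x hx
    rw [hP k i x hx]
    refine ciSup_le (fun j => ?_)
    have := Stmt9Aux.posP_nonneg (F k - (j:ℝ) • w i) hx
    linarith
  have hposPleF : ∀ k i (j : ℕ) (x : E), 0 ≤ x →
      Stmt9Aux.posP (F k - (j:ℝ) • w i) x ≤ F k x := by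
    intro k i j x hx
    refine Stmt9Aux.posP_le _ hx (fun z hz0 hzx => ?_)
    have h1 : 0 ≤ (j:ℝ) * w i z := mul_nonneg (by positivity) (hwpos i z hz0)
    have h2 : F k z ≤ F k x := Stmt9Aux.apply_mono_cone _ (hFpos k) hzx
    simp only [ContinuousLinearMap.sub_apply, ContinuousLinearMap.smul_apply, smul_eq_mul]
    linarith
  have hPpos : ∀ k i (x : E), 0 ≤ x → 0 ≤ P k i x := by
    intro k i x hx
    rw [hP k i x hx]
    refine le_trans (?_ : (0:ℝ) ≤ F k x - Stmt9Aux.posP (F k - ((0:ℕ):ℝ) • w i) x)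
      (le_ciSup (hMbdd k i x hx) 0)
    have := hposPleF k i 0 x hx
    linarith
  have hPgeM : ∀ k i (j : ℕ) (x : E), 0 ≤ x →
      F k x - Stmt9Aux.posP (F k - (j:ℝ) • w i) x ≤ P k i x := by
    intro k i j x hx
    rw [hP k i x hx]
    exact le_ciSup (hMbdd k i x hx) j
  have hPmonoW : ∀ k i i' : ℕ, i ≤ i' → ∀ x : E, 0 ≤ x → P k i x ≤ P k i' x := by
    intro k i i' hii x hx
    rw [hP k i x hx]
    refine ciSup_le (fun j => ?_)
    refine le_trans ?_ (hPgeM k i' j x hx)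
    have hmono : Stmt9Aux.posP (F k - (j:ℝ) • w i') x ≤ Stmt9Aux.posP (F k - (j:ℝ) • w i) x := by
      refine Stmt9Aux.posP_mono_fn hx (fun z hz0 hzx => ?_)
      have h1 := hwmono i i' hii z hz0
      have hj0 : (0:ℝ) ≤ (j:ℝ) := by positivity
      have h2 := mul_le_mul_of_nonneg_left h1 hj0
      simp only [ContinuousLinearMap.sub_apply, ContinuousLinearMap.smul_apply, smul_eq_mul]
      linarith
    linarith
  -- the disjoint sequence
  set g : ℕ → E →L[ℝ] ℝ := fun k => P k (k+1) - P k k with hgdef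
  have hgapply : ∀ k (x : E), g k x = P k (k+1) x - P k k x := by
    intro k x
    simp [hgdef, ContinuousLinearMap.sub_apply]
  have hgpos : ∀ k, ∀ x : E, 0 ≤ x → 0 ≤ g k x := by
    intro k x hx
    rw [hgapply]
    have := hPmonoW k k (k+1) (Nat.le_succ k) x hx
    linarith
  have hgleF : ∀ k (x : E), 0 ≤ x → g k x ≤ F k x := by
    intro k x hx
    rw [hgapply]
    have h1 := hPpos k k x hx
    have h2 := hPleF k (k+1) x hx
    linarith
  -- upper bound for P k k
  have hPkk_small : ∀ k (x : E), 0 ≤ x → P k k x ≤ δ * fA x := by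
    intro k x hx
    rw [hP k k x hx]
    refine ciSup_le (fun j => ?_)
    refine le_of_forall_pos_le_add (fun η hη => ?_)
    set η' : ℝ := η/((j:ℝ)+1) with hη'def
    have hη' : 0 < η' := by positivity
    have hwx : w k x = Stmt9Aux.posP (δ • fA - F k) x := hw k x hx
    obtain ⟨s, hs0, hsx, hs⟩ := Stmt9Aux.posP_witness (δ • fA - F k) hx
      (by linarith : Stmt9Aux.posP (δ • fA - F k) x - η' < Stmt9Aux.posP (δ • fA - F k) x)
    have hsval : (δ • fA - F k) s = δ * fA s - F k s := by
      simp [ContinuousLinearMap.sub_apply, ContinuousLinearMap.smul_apply, smul_eq_mul]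
    rw [hsval] at hs
    have hwk_s : δ * fA s - F k s ≤ w k s := hwlb k s hs0
    have hwk_xs : w k (x - s) < η' := by
      have heq : w k (x - s) = w k x - w k s := map_sub _ _ _
      rw [heq, hwx]
      linarith
    have hwx0 : 0 ≤ w k x := hwpos k x hx
    have hFks : F k s < δ * fA s + η' := by
      rw [← hwx] at hs
      linarith
    have hfAs : fA s ≤ fA x := Stmt9Aux.apply_mono_cone _ (hApos fA hfA) hsx
    have h1 : 0 ≤ x - s := sub_nonneg.mpr hsx
    have h2 : x - s ≤ x := sub_le_self x hs0
    have h3 := Stmt9Aux.posP_ge (F k - (j:ℝ) • w k) h1 h2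
    have h4 : (F k - (j:ℝ) • w k) (x-s) = F k (x-s) - (j:ℝ) * w k (x-s) := by
      simp [ContinuousLinearMap.sub_apply, ContinuousLinearMap.smul_apply, smul_eq_mul]
    rw [h4] at h3
    have h5 : F k (x-s) = F k x - F k s := map_sub _ _ _
    rw [h5] at h3
    have h6 : 0 ≤ w k (x - s) := hwpos k _ h1
    have hj0 : (0:ℝ) ≤ (j:ℝ) := by positivity
    have hδ0 : (0:ℝ) ≤ δ := hδpos.le
    have hδfA : δ * fA s ≤ δ * fA x := mul_le_mul_of_nonneg_left hfAs hδ0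
    have hjw : (j:ℝ) * w k (x-s) ≤ (j:ℝ) * η' := mul_le_mul_of_nonneg_left hwk_xs.le hj0
    have hlow : F k x - δ * fA x - ((j:ℝ)+1) * η' ≤ Stmt9Aux.posP (F k - (j:ℝ) • w k) x := by
      linarith
    have hexact : ((j:ℝ)+1) * η' = η := by
      rw [hη'def]
      field_simp
    linarith
  -- norm lower bound for g
  have hglow : ∀ k, ε/4 < g k (X k) := by
    intro k
    have hx := hX0 k
    have hposP_bound : Stmt9Aux.posP (F k - (j₁:ℝ) • w (k+1)) (X k)
        ≤ (j₁:ℝ) * F (k+1) (X k) := by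
      refine Stmt9Aux.posP_le _ hx (fun t ht0 htx => ?_)
      have h1 : δ * fA t - F (k+1) t ≤ w (k+1) t := hwlb (k+1) t ht0
      have h2 : F k t ≤ fA t := hFleF0 k t ht0
      have h4 : 0 ≤ fA t := hApos fA hfA t ht0
      have h3 : 1 * fA t ≤ ((j₁:ℝ) * δ) * fA t := mul_le_mul_of_nonneg_right hj₁ h4
      have h5 : F (k+1) t ≤ F (k+1) (X k) := Stmt9Aux.apply_mono_cone _ (hFpos (k+1)) htx
      have hm1 := mul_le_mul_of_nonneg_left h1 hj₁0
      have hm2 := mul_le_mul_of_nonneg_left h5 hj₁0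
      simp only [ContinuousLinearMap.sub_apply, ContinuousLinearMap.smul_apply, smul_eq_mul]
      nlinarith [hm1, hm2, h3, h2]
    have h6 := hPgeM k (k+1) j₁ (X k) hx
    have h7 : F (k+1) (X k) < δ'' := hcross k (k+1) (Nat.lt_succ_self k)
    have h8 : (j₁:ℝ) * F (k+1) (X k) ≤ (j₁:ℝ) * δ'' :=
      mul_le_mul_of_nonneg_left h7.le hj₁0
    have h9 : (j₁:ℝ) * δ'' < ε/8 := by
      rw [hδ''def]
      rw [← mul_div_assoc]
      rw [div_lt_div_iff₀ (by positivity) (by positivity : (0:ℝ) < 8)]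
      have : (0:ℝ) < 8*ε := by linarith
      nlinarith [this]
    have h11 := hPkk_small k (X k) hx
    have h12 : fA (X k) ≤ ‖fA‖ := by
      calc fA (X k) ≤ |fA (X k)| := le_abs_self _
      _ ≤ ‖fA‖ * ‖X k‖ := fA.le_opNorm _
      _ ≤ ‖fA‖ := by
          have := mul_le_mul_of_nonneg_left (hX1 k) (norm_nonneg fA)
          simpa using this
    have h13 : δ * fA (X k) ≤ ε/8 := by
      have h14 : δ * fA (X k) ≤ δ * (‖fA‖+1) := by
        have := mul_le_mul_of_nonneg_left (le_trans h12 (by linarith : ‖fA‖ ≤ ‖fA‖+1)) hδpos.le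
        linarith
      have h15 : δ * (‖fA‖+1) = ε/8 := by
        rw [hδdef]
        field_simp
      linarith
    have h16 := hXb k
    rw [hgapply]
    linarith
  -- disjointness witnesses
  have hdisjwit : ∀ k m : ℕ, k < m → ∀ x : E, 0 ≤ x → ∀ η : ℝ, 0 < η →
      ∃ z : E, 0 ≤ z ∧ z ≤ x ∧ g k z + g m (x - z) < η := by
    intro k m hkm x hx η hη
    have hPx := hP k (k+1) x hx
    have hlt : P k (k+1) x - η/8 <
        ⨆ j : ℕ, (F k x - Stmt9Aux.posP (F k - (j:ℝ) • w (k+1)) x) := by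
      rw [← hPx]; linarith
    obtain ⟨j₀, hj₀⟩ := exists_lt_of_lt_ciSup hlt
    have hj₀' : P k (k+1) x - η/8 <
        F k x - Stmt9Aux.posP (F k - (j₀:ℝ) • w (k+1)) x := hj₀
    set B : ℝ := F m x + η/8 with hBdef
    have hFmx0 : 0 ≤ F m x := hFpos m x hx
    have hB0 : 0 < B := by rw [hBdef]; linarith
    obtain ⟨K₀, hK₀⟩ := exists_nat_gt ((j₀:ℝ) * B / (η/8))
    set K : ℕ := K₀ + 1 with hKdef
    have hKpos : (0:ℝ) < (K:ℝ) := by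
      rw [hKdef]
      exact_mod_cast Nat.succ_pos K₀
    have hK1 : (j₀:ℝ) * B < (K:ℝ) * (η/8) := by
      have h2 : (0:ℝ) < η/8 := by linarith
      have h3 : (j₀:ℝ)*B < (K₀:ℝ)*(η/8) := by
        rwa [div_lt_iff₀ h2] at hK₀
      have h4 : (K₀:ℝ) ≤ (K:ℝ) := by
        rw [hKdef]
        exact_mod_cast Nat.le_succ K₀
      nlinarith
    clear_value K B
    -- witness z
    have hc'0 : 0 ≤ Stmt9Aux.posP (F m - (K:ℝ) • w (k+1)) x := Stmt9Aux.posP_nonneg _ hx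
    obtain ⟨z, hz0, hzx, hz⟩ := Stmt9Aux.posP_witness (F m - (K:ℝ) • w (k+1)) hx
      (by linarith : Stmt9Aux.posP (F m - (K:ℝ) • w (k+1)) x - η/8
        < Stmt9Aux.posP (F m - (K:ℝ) • w (k+1)) x)
    have hzval : (F m - (K:ℝ) • w (k+1)) z = F m z - (K:ℝ) * w (k+1) z := by
      simp [ContinuousLinearMap.sub_apply, ContinuousLinearMap.smul_apply, smul_eq_mul]
    rw [hzval] at hz
    have hFmz : F m z ≤ F m x := Stmt9Aux.apply_mono_cone _ (hFpos m) hzx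
    have hA2 : (K:ℝ) * w (k+1) z < B := by
      rw [hBdef]
      linarith
    have hwz0 : 0 ≤ w (k+1) z := hwpos (k+1) z hz0
    have hj₀wz : (j₀:ℝ) * w (k+1) z < η/8 := by
      by_contra hcon2
      push_neg at hcon2
      have h1 : (K:ℝ)*(η/8) ≤ (K:ℝ)*((j₀:ℝ)*w (k+1) z) :=
        mul_le_mul_of_nonneg_left hcon2 hKpos.le
      have h3 : (j₀:ℝ)*((K:ℝ)*w (k+1) z) ≤ (j₀:ℝ)*B :=
        mul_le_mul_of_nonneg_left hA2.le (by positivity)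
      have h5 : (K:ℝ) * ((j₀:ℝ) * w (k+1) z) = (j₀:ℝ)*((K:ℝ)*w (k+1) z) := by ring
      rw [h5] at h1
      exact absurd hK1 (not_lt.mpr (h1.trans h3))
    -- bound for g k z
    have hgkz : g k z < η/4 := by
      rw [hgapply]
      have h1 : 0 ≤ P k k z := hPpos k k z hz0
      obtain ⟨N, hN⟩ := Stmt9Aux.exists_posFun (F k - (j₀:ℝ) • w (k+1))
      have hτ : ∀ t : E, 0 ≤ t → 0 ≤ P k (k+1) t - (F k t - N t) := by
        intro t ht
        rw [hN t ht]
        have := hPgeM k (k+1) j₀ t ht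
        linarith
      have hτzx : P k (k+1) z - (F k z - N z) ≤ P k (k+1) x - (F k x - N x) := by
        have h5 := hτ (x - z) (sub_nonneg.mpr hzx)
        have e1 : P k (k+1) (x-z) = P k (k+1) x - P k (k+1) z := map_sub _ _ _
        have e2 : F k (x-z) = F k x - F k z := map_sub _ _ _
        have e3 : N (x-z) = N x - N z := map_sub _ _ _
        rw [e1, e2, e3] at h5
        linarith
      have h6 : P k (k+1) x - (F k x - N x) < η/8 := by
        rw [hN x hx]
        linarith
      have h7 : F k z - N z ≤ (j₀:ℝ) * w (k+1) z := by
        rw [hN z hz0]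
        have h3 := Stmt9Aux.posP_ge (F k - (j₀:ℝ) • w (k+1)) hz0 (le_refl z)
        have h4 : (F k - (j₀:ℝ) • w (k+1)) z = F k z - (j₀:ℝ)*w (k+1) z := by
          simp [ContinuousLinearMap.sub_apply, ContinuousLinearMap.smul_apply, smul_eq_mul]
        rw [h4] at h3
        linarith
      linarith
    -- bound for g m (x - z)
    have hgmxz : g m (x - z) ≤ η/8 := by
      have hxz0 : 0 ≤ x - z := sub_nonneg.mpr hzx
      rw [hgapply]
      have h1 : P m (m+1) (x-z) ≤ F m (x-z) := hPleF m (m+1) _ hxz0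
      have h2 := hPgeM m m (2*K) (x-z) hxz0
      have h3 : Stmt9Aux.posP (F m - ((2*K:ℕ):ℝ) • w m) (x-z)
          ≤ Stmt9Aux.posP (F m - ((2*K:ℕ):ℝ) • w (k+1)) (x-z) := by
        refine Stmt9Aux.posP_mono_fn hxz0 (fun t ht0 htx => ?_)
        have hwm := hwmono (k+1) m hkm t ht0
        have h2K0 : (0:ℝ) ≤ ((2*K:ℕ):ℝ) := by positivity
        have h2K1 := mul_le_mul_of_nonneg_left hwm h2K0
        simp only [ContinuousLinearMap.sub_apply, ContinuousLinearMap.smul_apply, smul_eq_mul]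
        linarith
      have h4 : Stmt9Aux.posP (F m - ((2*K:ℕ):ℝ) • w (k+1)) (x-z) ≤ η/8 := by
        refine Stmt9Aux.posP_le _ hxz0 (fun t ht0 htxz => ?_)
        have h5 : 0 ≤ w (k+1) t := hwpos (k+1) t ht0
        have h6 : 0 ≤ z + t := add_nonneg hz0 ht0
        have h7 : z + t ≤ x := by
          rwa [le_sub_iff_add_le'] at htxz
        have h8 := Stmt9Aux.posP_ge (F m - (K:ℝ) • w (k+1)) h6 h7
        have e1 : (F m - (K:ℝ) • w (k+1)) (z+t)
            = (F m z - (K:ℝ)*w (k+1) z) + (F m t - (K:ℝ)*w (k+1) t) := by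
          simp only [ContinuousLinearMap.sub_apply, ContinuousLinearMap.smul_apply,
            smul_eq_mul, map_add]
          try ring
        rw [e1] at h8
        have hcast : ((2*K:ℕ):ℝ) = 2*(K:ℝ) := by push_cast; ring
        have h9 : 0 ≤ (K:ℝ) * w (k+1) t := mul_nonneg hKpos.le h5
        simp only [ContinuousLinearMap.sub_apply, ContinuousLinearMap.smul_apply, smul_eq_mul]
        rw [hcast]
        linarith
      linarith
    exact ⟨z, hz0, hzx, by linarith⟩
  -- pairwise disjointness
  have hpair : Pairwise (fun a b => FunDisjoint (g a) (g b)) := by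
    intro a b hab
    rcases Nat.lt_or_ge a b with hlt | hge
    · refine Stmt9Aux.funDisjoint_of_witness _ _ (hgpos a) (hgpos b) ?_
      intro x hx η hη
      exact hdisjwit a b hlt x hx η hη
    · have hlt : b < a := lt_of_le_of_ne hge (Ne.symm hab)
      refine Stmt9Aux.funDisjoint_of_witness _ _ (hgpos a) (hgpos b) ?_
      intro x hx η hη
      obtain ⟨z, hz0, hzx, hzlt⟩ := hdisjwit b a hlt x hx η hη
      refine ⟨x - z, sub_nonneg.mpr hzx, sub_le_self x hz0, ?_⟩
      rw [sub_sub_cancel]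
      linarith
  -- membership in the solid hull of {fA}
  have hmem : ∀ n, g n ∈ DualSolidHull {fA} := by
    intro n
    refine ⟨fA, Set.mem_singleton _, ?_⟩
    intro x hx
    rw [Stmt9Aux.absVal_of_pos (g n) (hgpos n) hx,
      Stmt9Aux.absVal_of_pos fA (hApos fA hfA) hx]
    exact (hgleF n x hx).trans (hFleF0 n x hx)
  -- {fA} is an almost L-set
  have hALS : AlmostLSet {fA} := by
    constructor
    · exact Bornology.isBounded_singleton
    · intro xs hdisj hwk ε' hε'
      have h1 := hwk fA
      have h2 : ∀ᶠ n in atTop, fA (xs n) ∈ Set.Ioo (-ε') ε' :=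
        h1.eventually_mem (Ioo_mem_nhds (by linarith) hε')
      refine h2.mono (fun n hn f hf => ?_)
      rw [Set.mem_singleton_iff] at hf
      subst hf
      rw [abs_lt]
      exact ⟨hn.1, hn.2⟩
  obtain ⟨-, hLWC⟩ := h {fA} hALS
  have htend := hLWC g hmem hpair
  have hev : ∀ᶠ k in atTop, ‖g k‖ < ε/4 := by
    have h2 : ∀ᶠ k in atTop, ‖g k‖ ∈ Set.Iio (ε/4) :=
      htend.eventually_mem (Iio_mem_nhds (by linarith : (0:ℝ) < ε/4))
    exact h2.mono (fun k hk => hk)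
  obtain ⟨k, hk⟩ := hev.exists
  have hk2 : ε/4 < ‖g k‖ := by
    have h1 := hglow k
    have h2 : g k (X k) ≤ ‖g k‖ := by
      calc g k (X k) ≤ |g k (X k)| := le_abs_self _
      _ ≤ ‖g k‖ * ‖X k‖ := (g k).le_opNorm _
      _ ≤ ‖g k‖ := by
          have := mul_le_mul_of_nonneg_left (hX1 k) (norm_nonneg (g k))
          simpa using this
    linarith
  linarith
end
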